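/- arXiv:1507.06077 — 7 statements merged into one kernel-verified Lean document; each statement's English description precedes it below -/
import Mathlib

section
/- Let $J$ be an infinite set, $\lambda=(\lambda_j)_{j\in J}$ and $\chi=(d_j)_{j\in J}$ in $\mathbb{R}^J$. Suppose that for every finitely supported permutation $w$ of $J$, $\sum_{j\in J}\lambda_j(d_{w(j)}-d_j)\ge -C$ for some fixed constant $C$ (the positive energy condition for $W(A_J)$). If $m<n$ are real numbers, $r\in\mathbb{R}$, and the sets $J_m^{<r}=\{j: \lambda_j=m,\ d_j<r\}$ and $J_n^{>r}=\{j: \lambda_j=n,\ d_j>r\}$ are both nonempty, then $\{d_j: j\in J_m^{<r}\}$ and $\{d_j: j\in J_n^{>r}\}$ are bounded. -/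
open scoped BigOperators

/-- A permutation of `J` is finitely supported if it fixes all but finitely many elements. -/
def IsFinPerm {J : Type*} (w : Equiv.Perm J) : Prop := {j | w j ≠ j}.Finite

/-- A finitely supported sign function: takes values `±1` and equals `1` outside a finite set. -/
def IsSign {J : Type*} (σ : J → ℝ) : Prop :=
  (∀ j, σ j = 1 ∨ σ j = -1) ∧ {j | σ j ≠ 1}.Finite

/-- A finitely supported sign function whose support has even cardinality. -/
def IsEvenSign {J : Type*} (σ : J → ℝ) : Prop :=
  IsSign σ ∧ ∃ F : Finset J, (∀ j, σ j = -1 ↔ j ∈ F) ∧ Even F.card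

/-- The energy `λ(w⁻¹.χ - χ) = ∑ⱼ λⱼ (d_{w(j)} - dⱼ)` (a finite sum for `w` finitely
supported). -/
noncomputable def energyA {J : Type*} (lam d : J → ℝ) (w : Equiv.Perm J) : ℝ :=
  ∑ᶠ j, lam j * (d (w j) - d j)

/-- The energy `λ(σ w⁻¹.χ - χ) = ∑ⱼ λⱼ (σⱼ d_{w(j)} - dⱼ)`. -/
noncomputable def energyB {J : Type*} (lam d σ : J → ℝ) (w : Equiv.Perm J) : ℝ :=
  ∑ᶠ j, lam j * (σ j * d (w j) - d j)

/-- Positive energy condition for `W(A_J)`. -/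
def PECA {J : Type*} (lam d : J → ℝ) : Prop :=
  ∃ C : ℝ, ∀ w : Equiv.Perm J, IsFinPerm w → C ≤ energyA lam d w

/-- Positive energy condition for `W(B_J)`. -/
def PECB {J : Type*} (lam d : J → ℝ) : Prop :=
  ∃ C : ℝ, ∀ (σ : J → ℝ) (w : Equiv.Perm J), IsSign σ → IsFinPerm w → C ≤ energyB lam d σ w

/-- Positive energy condition for `W(D_J)`. -/
def PECD {J : Type*} (lam d : J → ℝ) : Prop :=
  ∃ C : ℝ, ∀ (σ : J → ℝ) (w : Equiv.Perm J), IsEvenSign σ → IsFinPerm w → C ≤ energyB lam d σ w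

section Aux
open Classical in
lemma isFinPerm_swap {J : Type*} (j k : J) : IsFinPerm (Equiv.swap j k) := by
  apply Set.Finite.subset ((Set.finite_singleton k).insert j)
  intro x hx
  simp only [Set.mem_setOf_eq] at hx
  by_contra h
  rw [Set.mem_insert_iff, Set.mem_singleton_iff] at h
  push_neg at h
  exact hx (Equiv.swap_apply_of_ne_of_ne h.1 h.2)

open Classical in
lemma energyA_swap {J : Type*} (lam d : J → ℝ) {j k : J} (hjk : j ≠ k) :
    energyA lam d (Equiv.swap j k) = (lam j - lam k) * (d k - d j) := by
  have hsub : (Function.support fun i => lam i * (d (Equiv.swap j k i) - d i)) ⊆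
      ({j, k} : Finset J) := by
    intro x hx
    simp only [Function.mem_support] at hx
    simp only [Finset.coe_insert, Finset.coe_singleton, Set.mem_insert_iff,
      Set.mem_singleton_iff]
    by_contra h
    push_neg at h
    rw [Equiv.swap_apply_of_ne_of_ne h.1 h.2] at hx
    simp at hx
  rw [energyA, finsum_eq_finset_sum_of_support_subset _ hsub,
    Finset.sum_pair hjk, Equiv.swap_apply_left, Equiv.swap_apply_right]
  ring

end Aux

theorem pecA_bounded_subsets (J : Type*) [Infinite J] (lam d : J → ℝ) (C : ℝ)
    (hpec : ∀ w : Equiv.Perm J, IsFinPerm w → -C ≤ energyA lam d w)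
    (m n r : ℝ) (hmn : m < n)
    (h1 : {j | lam j = m ∧ d j < r}.Nonempty)
    (h2 : {j | lam j = n ∧ r < d j}.Nonempty) :
    (BddBelow (d '' {j | lam j = m ∧ d j < r}) ∧ BddAbove (d '' {j | lam j = m ∧ d j < r})) ∧
    (BddBelow (d '' {j | lam j = n ∧ r < d j}) ∧ BddAbove (d '' {j | lam j = n ∧ r < d j})) := by
  classical
  obtain ⟨j0, hj0m, hj0r⟩ := h1
  obtain ⟨k0, hk0n, hk0r⟩ := h2
  have hnm : (0:ℝ) < n - m := by linarith
  -- key estimate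
  have key : ∀ j k : J, lam j = m → d j < r → lam k = n → r < d k →
      d k - d j ≤ C / (n - m) := by
    intro j k hjm hjr hkn hkr
    have hjk : j ≠ k := by rintro rfl; linarith
    have h := hpec (Equiv.swap j k) (isFinPerm_swap j k)
    rw [energyA_swap lam d hjk, hjm, hkn] at h
    rw [le_div_iff₀ hnm]
    nlinarith
  refine ⟨⟨⟨d k0 - C / (n - m), ?_⟩, ⟨r, ?_⟩⟩, ⟨⟨r, ?_⟩, ⟨d j0 + C / (n - m), ?_⟩⟩⟩
  · rintro x ⟨j, ⟨hjm, hjr⟩, rfl⟩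
    have := key j k0 hjm hjr hk0n hk0r
    linarith
  · rintro x ⟨j, ⟨hjm, hjr⟩, rfl⟩
    exact le_of_lt hjr
  · rintro x ⟨k, ⟨hkn, hkr⟩, rfl⟩
    exact le_of_lt hkr
  · rintro x ⟨k, ⟨hkn, hkr⟩, rfl⟩
    have := key j0 k hj0m hj0r hkn hkr
    linarith
end

section
/- Let $J$ be an infinite set and $\lambda,\chi\in\mathbb{R}^J$ satisfy the positive energy condition for $W(A_J)$. For real numbers $m<n$, there exists at most one $r\in\mathbb{R}$ such that both $J_m^{<r}=\{j:\lambda_j=m,\ d_j<r\}$ and $J_n^{>r}=\{j:\lambda_j=n,\ d_j>r\}$ are infinite. -/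
open scoped BigOperators

lemma key_no_pecA {J : Type*} (lam d : J → ℝ) (m n r s : ℝ) (hmn : m < n) (hrs : r < s)
    (hA : {j | lam j = m ∧ d j < r}.Infinite) (hB : {j | lam j = n ∧ s < d j}.Infinite) :
    ¬ PECA lam d := by
  rintro ⟨C, hC⟩
  set ε : ℝ := (n - m) * (s - r) with hεdef
  have hε : 0 < ε := mul_pos (by linarith) (by linarith)
  have main : ∀ N : ℕ, ∃ w : Equiv.Perm J, IsFinPerm w ∧
      energyA lam d w ≤ -(N * ε) := by
    intro N
    induction N with
    | zero =>
      refine ⟨1, ?_, ?_⟩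
      · have : {j : J | (1 : Equiv.Perm J) j ≠ j} = ∅ := by
          ext j; simp
        rw [IsFinPerm, this]; exact Set.finite_empty
      · simp [energyA]
    | succ N ih =>
      obtain ⟨w, hw, hE⟩ := ih
      have hA' : ({j | lam j = m ∧ d j < r} \ {j | w j ≠ j}).Infinite := hA.diff hw
      obtain ⟨a, ha, haS⟩ := hA'.nonempty
      have hB' : ({j | lam j = n ∧ s < d j} \ ({j | w j ≠ j} ∪ {a})).Infinite :=
        hB.diff (hw.union (Set.finite_singleton a))
      obtain ⟨b, hb, hbS⟩ := hB'.nonempty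
      have hwa : w a = a := by simpa using haS
      have hwb : w b = b := by
        have : b ∉ {j | w j ≠ j} := fun h => hbS (Set.mem_union_left _ h)
        simpa using this
      have hab : a ≠ b := by
        intro h; rw [h] at ha; exact absurd (ha.2.trans hrs) (not_lt.2 hb.2.le)
      classical
      refine ⟨w * Equiv.swap a b, ?_, ?_⟩
      · apply Set.Finite.subset (hw.union ((Set.finite_singleton b).insert a))
        intro j hj
        by_cases hja : j = a
        · exact Or.inr (by simp [hja])
        · by_cases hjb : j = b
          · exact Or.inr (by simp [hjb])
          · left
            have : Equiv.swap a b j = j := Equiv.swap_apply_of_ne_of_ne hja hjb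
            simpa [Equiv.Perm.mul_apply, this] using hj
      · set F : J → ℝ := fun j => lam j * (d (w j) - d j) with hF
        set G : J → ℝ := fun j => lam j * (d (Equiv.swap a b j) - d j) with hG
        have hFsupp : (Function.support F).Finite := by
          apply Set.Finite.subset hw
          intro j hj
          simp only [Set.mem_setOf_eq]
          intro h; apply hj; simp [hF, h]
        have hGsupp : (Function.support G).Finite := by
          apply Set.Finite.subset ((Set.finite_singleton b).insert a)
          intro j hj
          by_contra hjn
          simp only [Set.mem_insert_iff, Set.mem_singleton_iff, not_or] at hjn
          apply hj
          simp [hG, Equiv.swap_apply_of_ne_of_ne hjn.1 hjn.2]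
        have heq : ∀ j, lam j * (d ((w * Equiv.swap a b) j) - d j) = F j + G j := by
          intro j
          by_cases hja : j = a
          · subst hja
            simp only [hF, hG, Equiv.Perm.mul_apply, Equiv.swap_apply_left, hwa, hwb,
              Equiv.swap_apply_right]
            ring
          · by_cases hjb : j = b
            · subst hjb
              simp only [hF, hG, Equiv.Perm.mul_apply, Equiv.swap_apply_right, hwa, hwb,
                Equiv.swap_apply_left]
              ring
            · have hsw : Equiv.swap a b j = j := Equiv.swap_apply_of_ne_of_ne hja hjb
              simp [hF, hG, Equiv.Perm.mul_apply, hsw]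
        have hEsplit : energyA lam d (w * Equiv.swap a b) = energyA lam d w + ∑ᶠ j, G j := by
          rw [energyA]
          calc (∑ᶠ j, lam j * (d ((w * Equiv.swap a b) j) - d j))
              = ∑ᶠ j, (F j + G j) := by exact finsum_congr heq
            _ = (∑ᶠ j, F j) + ∑ᶠ j, G j := finsum_add_distrib hFsupp hGsupp
            _ = energyA lam d w + ∑ᶠ j, G j := rfl
        have hGsum : (∑ᶠ j, G j) = G a + G b := by
          rw [finsum_eq_finset_sum_of_support_subset G (s := {a, b})]
          · rw [Finset.sum_pair hab]
          · intro j hj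
            by_contra hjn
            simp only [Finset.coe_insert, Finset.coe_singleton, Set.mem_insert_iff,
              Set.mem_singleton_iff, not_or] at hjn
            apply hj
            simp [hG, Equiv.swap_apply_of_ne_of_ne hjn.1 hjn.2]
        have hGval : G a + G b ≤ -ε := by
          have h1 : G a = m * (d b - d a) := by simp [hG, Equiv.swap_apply_left, ha.1]
          have h2 : G b = n * (d a - d b) := by simp [hG, Equiv.swap_apply_right, hb.1]
          rw [h1, h2, hεdef]
          have hda : d a < r := ha.2
          have hdb : s < d b := hb.2
          nlinarith
        have : energyA lam d (w * Equiv.swap a b) ≤ -(N * ε) + -ε := by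
          rw [hEsplit, hGsum]; linarith
        refine le_trans this ?_
        push_cast
        ring_nf
        linarith
  obtain ⟨N, hN⟩ := exists_nat_gt (-C / ε)
  obtain ⟨w, hw, hE⟩ := main N
  have h1 : -C / ε < N := hN
  have h2 : -C < N * ε := by
    rw [div_lt_iff₀ hε] at h1; linarith
  have := hC w hw
  linarith

theorem pecA_at_most_one_r (J : Type*) [Infinite J] (lam d : J → ℝ)
    (hpec : PECA lam d) (m n : ℝ) (hmn : m < n) :
    ∀ r₁ r₂ : ℝ,
      {j | lam j = m ∧ d j < r₁}.Infinite → {j | lam j = n ∧ r₁ < d j}.Infinite →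
      {j | lam j = m ∧ d j < r₂}.Infinite → {j | lam j = n ∧ r₂ < d j}.Infinite →
      r₁ = r₂ := by
  intro r₁ r₂ h1 h2 h3 h4
  by_contra hne
  rcases lt_or_gt_of_ne hne with h | h
  · exact key_no_pecA lam d m n r₁ r₂ hmn h h1 h4 hpec
  · exact key_no_pecA lam d m n r₂ r₁ hmn h h3 h2 hpec
end

section
/- Let $J$ be a set and $\lambda=(\lambda_j)_{j\in J},\chi=(d_j)_{j\in J}\in\mathbb{R}^J$. Then the following are equivalent: (1) for every finitely supported permutation $w$ of $J$ and every finitely supported sign function $\sigma\colon J\to\{\pm 1\}$ (equal to $+1$ outside a finite set), $\sum_j\lambda_j(\sigma_j d_{w(j)}-d_j)\ge 0$; (2) $\lambda_j d_j\le 0$ for all $j\in J$, and for all $i,j\in J$, $|\lambda_i|<|\lambda_j|$ implies $|d_i|\le|d_j|$. -/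
open scoped BigOperators

lemma energyB_eq {J : Type*} (lam d σ : J → ℝ) (w : Equiv.Perm J) (s : Finset J)
    (hw : ∀ j, w j ≠ j → j ∈ s) (hσ : ∀ j, σ j ≠ 1 → j ∈ s) :
    energyB lam d σ w = ∑ j ∈ s, lam j * (σ j * d (w j) - d j) := by
  apply finsum_eq_sum_of_support_subset
  intro j hj
  simp only [Function.mem_support] at hj
  by_contra hjs
  have h1 : w j = j := by by_contra h; exact hjs (hw j h)
  have h2 : σ j = 1 := by by_contra h; exact hjs (hσ j h)
  rw [h1, h2] at hj
  simp at hj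

theorem minimal_energy_cone_B (J : Type*) (lam d : J → ℝ) :
    (∀ (σ : J → ℝ) (w : Equiv.Perm J), IsSign σ → IsFinPerm w →
        0 ≤ energyB lam d σ w) ↔
    ((∀ j, lam j * d j ≤ 0) ∧ ∀ i j : J, |lam i| < |lam j| → |d i| ≤ |d j|) := by
  classical
  constructor
  · intro h
    have hneg : ∀ j, lam j * d j ≤ 0 := by
      intro j0
      set σ : J → ℝ := fun j => if j = j0 then -1 else 1 with hσdef
      have hsign : IsSign σ := by
        constructor
        · intro j; by_cases hj : j = j0 <;> simp [hσdef, hj]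
        · apply Set.Finite.subset (Set.finite_singleton j0)
          intro j hj
          simp only [Set.mem_setOf_eq, hσdef] at hj
          simp only [Set.mem_singleton_iff]
          by_contra hne; simp [hne] at hj
      have hperm : IsFinPerm (1 : Equiv.Perm J) := by
        simp [IsFinPerm]
      have := h σ 1 hsign hperm
      rw [energyB_eq lam d σ 1 {j0} (by simp) ?_] at this
      · simp [hσdef] at this
        nlinarith [this]
      · intro j hj
        simp only [hσdef] at hj
        rw [Finset.mem_singleton]
        by_contra hne
        simp [hne] at hj
    refine ⟨hneg, ?_⟩
    intro i j hij
    by_cases hne : i = j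
    · subst hne; exact le_refl _
    have hji : j ≠ i := fun h => hne h.symm
    set σ : J → ℝ := fun k =>
      if k = i then (if 0 ≤ lam i * d j then -1 else 1)
      else if k = j then (if 0 ≤ lam j * d i then -1 else 1) else 1 with hσdef
    have hsign : IsSign σ := by
      constructor
      · intro k
        by_cases hk : k = i
        · by_cases h2 : 0 ≤ lam i * d j <;> simp [hσdef, hk, h2]
        · by_cases hk2 : k = j
          · by_cases h2 : 0 ≤ lam j * d i <;> simp [hσdef, hk, hk2, hji, h2]
          · simp [hσdef, hk, hk2]
      · apply Set.Finite.subset ((Set.finite_singleton j).insert i)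
        intro k hk
        simp only [Set.mem_setOf_eq, hσdef] at hk
        simp only [Set.mem_insert_iff, Set.mem_singleton_iff]
        by_contra hkm
        push_neg at hkm
        simp [hkm.1, hkm.2] at hk
    have hperm : IsFinPerm (Equiv.swap i j) := by
      apply Set.Finite.subset ((Set.finite_singleton j).insert i)
      intro k hk
      simp only [Set.mem_setOf_eq] at hk
      simp only [Set.mem_insert_iff, Set.mem_singleton_iff]
      by_contra hkm
      push_neg at hkm
      rw [Equiv.swap_apply_of_ne_of_ne hkm.1 hkm.2] at hk
      exact hk rfl
    have hE := h σ (Equiv.swap i j) hsign hperm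
    rw [energyB_eq lam d σ (Equiv.swap i j) {i, j} ?_ ?_] at hE
    · rw [Finset.sum_pair hne] at hE
      have hsi : σ i = if 0 ≤ lam i * d j then -1 else 1 := by simp [hσdef]
      have hsj : σ j = if 0 ≤ lam j * d i then -1 else 1 := by simp [hσdef, hji]
      have e1 : σ i * (lam i * d j) = -(|lam i| * |d j|) := by
        rw [hsi, ← abs_mul]
        split_ifs with hc
        · rw [abs_of_nonneg hc]; ring
        · rw [abs_of_neg (lt_of_not_ge hc)]; ring
      have e2 : σ j * (lam j * d i) = -(|lam j| * |d i|) := by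
        rw [hsj, ← abs_mul]
        split_ifs with hc
        · rw [abs_of_nonneg hc]; ring
        · rw [abs_of_neg (lt_of_not_ge hc)]; ring
      have e3 : lam i * d i = -(|lam i| * |d i|) := by
        rw [← abs_mul, abs_of_nonpos (hneg i)]; ring
      have e4 : lam j * d j = -(|lam j| * |d j|) := by
        rw [← abs_mul, abs_of_nonpos (hneg j)]; ring
      rw [Equiv.swap_apply_left, Equiv.swap_apply_right] at hE
      have key : 0 ≤ -(|lam i| * |d j|) + |lam i| * |d i| - |lam j| * |d i| + |lam j| * |d j| := by
        nlinarith [hE, e1, e2, e3, e4]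
      nlinarith [key, hij, abs_nonneg (d i), abs_nonneg (d j)]
    · intro k hk
      rw [Finset.mem_insert, Finset.mem_singleton]
      by_contra hkm
      push_neg at hkm
      rw [Equiv.swap_apply_of_ne_of_ne hkm.1 hkm.2] at hk
      exact hk rfl
    · intro k hk
      simp only [hσdef] at hk
      rw [Finset.mem_insert, Finset.mem_singleton]
      by_contra hkm
      push_neg at hkm
      simp [hkm.1, hkm.2] at hk
  · rintro ⟨h1, h2⟩ σ w hσ hw
    obtain ⟨hσval, hσfin⟩ := hσ
    set s : Finset J := hw.toFinset ∪ hσfin.toFinset with hs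
    have hws : ∀ j, w j ≠ j → j ∈ s := fun j hj => by
      exact Finset.mem_union_left _ ((Set.Finite.mem_toFinset (s := {j | w j ≠ j}) hw).mpr hj)
    have hσs : ∀ j, σ j ≠ 1 → j ∈ s := fun j hj => by
      simp [hs, Set.Finite.mem_toFinset, hj]
    rw [energyB_eq lam d σ w s hws hσs]
    have habs : ∀ j, |σ j| = 1 := by
      intro j; rcases hσval j with h | h <;> simp [h]
    have e4 : ∀ j, lam j * d j = -(|lam j| * |d j|) := by
      intro j; rw [← abs_mul, abs_of_nonpos (h1 j)]; ring
    have step1 : ∀ j ∈ s, -(|lam j| * |d (w j)|) + |lam j| * |d j| ≤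
        lam j * (σ j * d (w j) - d j) := by
      intro j _
      have hb : -(|lam j| * |d (w j)|) ≤ lam j * (σ j * d (w j)) := by
        have : |lam j * (σ j * d (w j))| = |lam j| * |d (w j)| := by
          rw [abs_mul, abs_mul, habs j, one_mul]
        linarith [neg_abs_le (lam j * (σ j * d (w j))), this.ge, this.le]
      have : lam j * (σ j * d (w j) - d j) =
          lam j * (σ j * d (w j)) + |lam j| * |d j| := by
        rw [mul_sub, e4 j]; ring
      linarith [hb]
    have hmono : MonovaryOn (fun j => |lam j|) (fun j => |d j|) (s : Set J) := by
      apply Monovary.monovaryOn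
      have hm : Monovary (fun j => |d j|) (fun j => |lam j|) := fun i j hij => h2 i j hij
      exact hm.symm
    have hsub : {x | w x ≠ x} ⊆ (s : Set J) := fun x hx => hws x hx
    have hrearr := hmono.sum_smul_comp_perm_le_sum_smul hsub
    simp only [smul_eq_mul] at hrearr
    calc (0 : ℝ) ≤ ∑ j ∈ s, (-(|lam j| * |d (w j)|) + |lam j| * |d j|) := by
          rw [Finset.sum_add_distrib, Finset.sum_neg_distrib]
          linarith [hrearr]
      _ ≤ ∑ j ∈ s, lam j * (σ j * d (w j) - d j) := Finset.sum_le_sum step1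
end

section
/- Let $J$ be an infinite set and $\lambda=(\lambda_j),\chi=(d_j)\in\mathbb{R}^J$. Suppose the positive energy condition holds for $W(D_J)$: the infimum, over finitely supported permutations $w$ of $J$ and finitely supported sign functions $\sigma$ with support of even cardinality, of $\sum_j\lambda_j(\sigma_jd_{w(j)}-d_j)$ is finite. Then $\sum_{j\in J_+}|\lambda_jd_j|<\infty$, where $J_+=\{j\in J: \lambda_jd_j>0\}$. -/
open scoped BigOperators

lemma pecD_key {J : Type*} {lam d : J → ℝ} {C : ℝ}
    (h : ∀ (σ : J → ℝ) (w : Equiv.Perm J), IsEvenSign σ → IsFinPerm w → C ≤ energyB lam d σ w)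
    (F : Finset J) (hF : Even F.card) :
    ∑ j ∈ F, lam j * d j ≤ -C / 2 := by
  classical
  set σ : J → ℝ := fun j => if j ∈ F then -1 else 1 with hσ
  have hsign : IsEvenSign σ := by
    refine ⟨⟨fun j => ?_, ?_⟩, F, fun j => ?_, hF⟩
    · by_cases hj : j ∈ F <;> simp [σ, hj]
    · apply F.finite_toSet.subset
      intro j hj
      by_contra hjF
      simp only [Finset.mem_coe] at hjF
      simp [σ, hjF] at hj
    · by_cases hj : j ∈ F <;> simp [σ, hj] <;> norm_num
  have hperm : IsFinPerm (1 : Equiv.Perm J) := by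
    simp [IsFinPerm]
  have hE := h σ 1 hsign hperm
  have hcalc : energyB lam d σ 1 = ∑ j ∈ F, (-2) * (lam j * d j) := by
    rw [energyB]
    rw [finsum_eq_finset_sum_of_support_subset _ (s := F)]
    · apply Finset.sum_congr rfl
      intro j hj
      simp [σ, hj]; ring
    · intro j hj
      simp only [Function.mem_support, ne_eq] at hj
      by_contra hjF
      simp only [Finset.mem_coe] at hjF
      simp [σ, hjF] at hj
  rw [hcalc, ← Finset.mul_sum] at hE
  · linarith

theorem pecD_summability_at_zero (J : Type*) [Infinite J] (lam d : J → ℝ)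
    (hpec : PECD lam d) :
    Summable fun j : {j : J // 0 < lam j * d j} => |lam j.1 * d j.1| := by
  classical
  obtain ⟨C, h⟩ := hpec
  have : Nonempty J := inferInstance
  set k0 : J := Classical.arbitrary J with hk0
  have hbound : ∀ F : Finset J, ∑ j ∈ F, lam j * d j ≤ -C / 2 + 2 * |lam k0 * d k0| := by
    intro F
    set F' : Finset J := F.erase k0 with hF'
    have hk0F' : k0 ∉ F' := Finset.notMem_erase _ _
    have h1 : ∑ j ∈ F, lam j * d j ≤ ∑ j ∈ F', lam j * d j + |lam k0 * d k0| := by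
      by_cases hk : k0 ∈ F
      · rw [← Finset.sum_erase_add F _ hk]
        have := le_abs_self (lam k0 * d k0)
        linarith
      · rw [hF', Finset.erase_eq_of_notMem hk]
        have := abs_nonneg (lam k0 * d k0)
        linarith
    have h2 : ∑ j ∈ F', lam j * d j ≤ -C / 2 + |lam k0 * d k0| := by
      rcases Nat.even_or_odd F'.card with he | ho
      · have := pecD_key h F' he
        have := abs_nonneg (lam k0 * d k0)
        linarith
      · have hins : Even (insert k0 F').card := by
          rw [Finset.card_insert_of_notMem hk0F']
          exact Odd.add_one ho
        have := pecD_key h (insert k0 F') hins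
        rw [Finset.sum_insert hk0F'] at this
        have := neg_abs_le (lam k0 * d k0)
        linarith
    linarith
  apply summable_of_sum_le (c := -C / 2 + 2 * |lam k0 * d k0|)
  · intro x
    exact abs_nonneg _
  · intro u
    have : ∑ x ∈ u, |lam x.1 * d x.1| = ∑ j ∈ u.image Subtype.val, lam j * d j := by
      rw [Finset.sum_image (fun x _ y _ h => Subtype.val_injective h)]
      exact Finset.sum_congr rfl fun x _ => abs_of_pos x.2
    rw [this]
    exact hbound _
end

section
/- Let $J$ be an infinite set, $\lambda=(\lambda_j)_{j\in J}\in\mathbb{R}^J$ with finite range (i.e. $\{\lambda_j:j\in J\}$ is a finite set), and $\chi=(d_j)_{j\in J}\in\mathbb{R}^J$. Then the following are equivalent: (1) $(J,\lambda,\chi)$ satisfies the positive energy condition for $W(A_J)$, i.e. $\inf_w\sum_j\lambda_j(d_{w(j)}-d_j)>-\infty$ over finitely supported permutations $w$ of $J$; (2) $\chi=\chi_0+\chi_1$ where $\chi_1\in\ell^1(J)$ and $\chi_0=(d'_j)$ satisfies: $\lambda_i<\lambda_j$ implies $d'_i\ge d'_j$ for all $i,j\in J$. -/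
open scoped BigOperators

namespace PecaAux

variable {J : Type*} (lam d : J → ℝ)

lemma energyA_eq_sum (w : Equiv.Perm J) (s : Finset J) (h : ∀ j, w j ≠ j → j ∈ s) :
    energyA lam d w = ∑ j ∈ s, lam j * (d (w j) - d j) := by
  apply finsum_eq_sum_of_support_subset
  intro j hj
  exact h j fun hc => hj (by simp [hc])

lemma energyA_swap [DecidableEq J] {i j : J} (hij : i ≠ j) :
    energyA lam d (Equiv.swap i j) = (lam i - lam j) * (d j - d i) := by
  rw [energyA_eq_sum lam d _ {i, j} ?_]
  · rw [Finset.sum_insert (by simp [hij]), Finset.sum_singleton,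
      Equiv.swap_apply_left, Equiv.swap_apply_right]
    ring
  · intro k hk
    simp only [Finset.mem_insert, Finset.mem_singleton]
    by_contra hc
    push_neg at hc
    exact hk (Equiv.swap_apply_of_ne_of_ne hc.1 hc.2)

lemma isFinPerm_swap [DecidableEq J] (i j : J) : IsFinPerm (Equiv.swap i j) := by
  apply Set.Finite.subset ((Set.finite_singleton j).insert i)
  intro k hk
  simp only [Set.mem_setOf_eq] at hk
  by_contra hc
  simp only [Set.mem_insert_iff, Set.mem_singleton_iff, not_or] at hc
  exact hk (Equiv.swap_apply_of_ne_of_ne hc.1 hc.2)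

lemma isFinPerm_mul {w w' : Equiv.Perm J} (hw : IsFinPerm w) (hw' : IsFinPerm w') :
    IsFinPerm (w * w') := by
  apply Set.Finite.subset (hw.union hw')
  intro j hj
  simp only [Set.mem_setOf_eq] at hj
  by_contra hc
  simp only [Set.mem_union, Set.mem_setOf_eq] at hc
  push_neg at hc
  exact hj (by simp [Equiv.Perm.mul_apply, hc.2, hc.1])

lemma energyA_mul {w w' : Equiv.Perm J} (hw : IsFinPerm w) (hw' : IsFinPerm w')
    (hd : ∀ j, w j = j ∨ w' j = j) :
    energyA lam d (w * w') = energyA lam d w + energyA lam d w' := by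
  have key : ∀ j, lam j * (d ((w * w') j) - d j)
      = lam j * (d (w j) - d j) + lam j * (d (w' j) - d j) := by
    intro j
    by_cases h1 : w' j = j
    · simp [Equiv.Perm.mul_apply, h1]
    · rcases hd j with h2 | h2
      · have h3 : w (w' j) = w' j := by
          rcases hd (w' j) with h4 | h4
          · exact h4
          · exact absurd (w'.injective h4) h1
        simp only [Equiv.Perm.mul_apply, h3, h2]
        ring
      · exact absurd h2 h1
  have hsupp : ∀ (u : Equiv.Perm J), IsFinPerm u →
      (Function.support fun j => lam j * (d (u j) - d j)).Finite := by
    intro u hu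
    apply hu.subset
    intro j hj
    simp only [Function.mem_support] at hj
    intro hc
    exact hj (by simp [hc])
  calc energyA lam d (w * w')
      = ∑ᶠ j, (lam j * (d (w j) - d j) + lam j * (d (w' j) - d j)) := finsum_congr key
    _ = energyA lam d w + energyA lam d w' :=
        finsum_add_distrib (hsupp w hw) (hsupp w' hw')

noncomputable def perml [DecidableEq J] (l : List (J × J)) : Equiv.Perm J :=
  (l.map fun p => Equiv.swap p.1 p.2).prod

lemma perml_spec [DecidableEq J] (l : List (J × J))
    (hnd : (l.map Prod.fst ++ l.map Prod.snd).Nodup)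
    (hne : ∀ p ∈ l, p.1 ≠ p.2) :
    IsFinPerm (perml l) ∧
      (∀ j, perml l j ≠ j → (j ∈ l.map Prod.fst ∨ j ∈ l.map Prod.snd)) ∧
      energyA lam d (perml l) =
        (l.map fun p => (lam p.1 - lam p.2) * (d p.2 - d p.1)).sum := by
  induction l with
  | nil =>
    refine ⟨?_, ?_, ?_⟩
    · simp only [perml, List.map_nil, List.prod_nil, IsFinPerm]
      convert Set.finite_empty
      ext j; simp
    · intro j hj; exact absurd rfl hj
    · simp [perml, energyA]
  | cons p l ih =>
    have hsub : (l.map Prod.fst ++ l.map Prod.snd).Sublist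
        ((p :: l).map Prod.fst ++ (p :: l).map Prod.snd) := by
      simp only [List.map_cons]
      exact List.Sublist.append (List.sublist_cons_self _ _) (List.sublist_cons_self _ _)
    have hnd' : (l.map Prod.fst ++ l.map Prod.snd).Nodup := hnd.sublist hsub
    have hne' : ∀ q ∈ l, q.1 ≠ q.2 := fun q hq => hne q (List.mem_cons_of_mem _ hq)
    obtain ⟨ihfp, ihsupp, ihE⟩ := ih hnd' hne'
    -- memberships from hnd
    have hmem : p.1 ∉ l.map Prod.fst ∧ p.1 ∉ l.map Prod.snd ∧
        p.2 ∉ l.map Prod.fst ∧ p.2 ∉ l.map Prod.snd ∧ p.1 ≠ p.2 := by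
      simp only [List.map_cons] at hnd
      rw [List.nodup_append] at hnd
      obtain ⟨h1, h2, h3⟩ := hnd
      rw [List.nodup_cons] at h1 h2
      refine ⟨h1.1, ?_, ?_, h2.1, ?_⟩
      · intro hmem
        exact h3 _ List.mem_cons_self _ (List.mem_cons_of_mem _ hmem) rfl
      · intro hmem
        exact h3 _ (List.mem_cons_of_mem _ hmem) _ List.mem_cons_self rfl
      · intro heq
        exact h3 _ List.mem_cons_self _ List.mem_cons_self heq
    obtain ⟨hm1, hm2, hm3, hm4, hm5⟩ := hmem
    have hperml : perml (p :: l) = Equiv.swap p.1 p.2 * perml l := by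
      simp [perml]
    have hdisj : ∀ j, Equiv.swap p.1 p.2 j = j ∨ perml l j = j := by
      intro j
      by_cases hj : perml l j = j
      · exact Or.inr hj
      · left
        rcases ihsupp j hj with hjf | hjs
        · exact Equiv.swap_apply_of_ne_of_ne (fun h => hm1 (h ▸ hjf)) (fun h => hm3 (h ▸ hjf))
        · exact Equiv.swap_apply_of_ne_of_ne (fun h => hm2 (h ▸ hjs)) (fun h => hm4 (h ▸ hjs))
    have hswapfin : IsFinPerm (Equiv.swap p.1 p.2) := isFinPerm_swap p.1 p.2
    refine ⟨?_, ?_, ?_⟩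
    · rw [hperml]; exact isFinPerm_mul hswapfin ihfp
    · intro j hj
      rw [hperml] at hj
      by_cases hjl : perml l j = j
      · have hsw : Equiv.swap p.1 p.2 j ≠ j := by
          simpa [Equiv.Perm.mul_apply, hjl] using hj
        have : j = p.1 ∨ j = p.2 := by
          by_contra hc
          push_neg at hc
          exact hsw (Equiv.swap_apply_of_ne_of_ne hc.1 hc.2)
        rcases this with h | h <;> simp [h, List.map_cons]
      · rcases ihsupp j hjl with h | h
        · exact Or.inl (by simp [List.map_cons]; right; simpa using h)
        · exact Or.inr (by simp [List.map_cons]; right; simpa using h)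
    · rw [hperml, energyA_mul lam d hswapfin ihfp hdisj, energyA_swap lam d hm5, ihE]
      simp [List.map_cons]

lemma unb_of_not_summable {g : J → ℝ} (hg : 0 ≤ g) (hs : ¬ Summable g) (R : ℝ) :
    ∃ s : Finset J, R < ∑ j ∈ s, g j := by
  by_contra hcon
  push_neg at hcon
  exact hs (summable_of_sum_le hg hcon)

lemma infinite_of_not_summable {g : J → ℝ} (hs : ¬ Summable g) :
    {j | g j ≠ 0}.Infinite := by
  by_contra h
  rw [Set.not_infinite] at h
  exact hs (summable_of_finite_support h)

variable {lam d} in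
lemma matching_bound [DecidableEq J] {C : ℝ}
    (hC : ∀ w : Equiv.Perm J, IsFinPerm w → C ≤ energyA lam d w)
    {δ v : ℝ} (hgap : ∀ j : J, v < lam j → δ ≤ lam j - v)
    (l : List (J × J)) (hnd : (l.map Prod.fst ++ l.map Prod.snd).Nodup)
    (hp : ∀ p ∈ l, lam p.1 ≤ v ∧ v < lam p.2 ∧ d p.1 < d p.2) :
    δ * (l.map fun p => d p.2 - d p.1).sum ≤ -C := by
  have hne : ∀ p ∈ l, p.1 ≠ p.2 := by
    intro p hpl heq
    obtain ⟨h1, h2, -⟩ := hp p hpl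
    rw [heq] at h1
    linarith
  obtain ⟨hfp, -, hE⟩ := perml_spec lam d l hnd hne
  have h1 : C ≤ (l.map fun p => (lam p.1 - lam p.2) * (d p.2 - d p.1)).sum := hE ▸ hC _ hfp
  have h2 : ∀ (f : J × J → ℝ) (l' : List (J × J)),
      (l'.map fun p => -(f p)).sum = -((l'.map f).sum) := by
    intro f l'
    induction l' with
    | nil => simp
    | cons a t ih => simp [ih]; ring
  have h3 : ∀ (c : ℝ) (f : J × J → ℝ) (l' : List (J × J)),
      (l'.map fun p => c * f p).sum = c * (l'.map f).sum := by
    intro c f l'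
    induction l' with
    | nil => simp
    | cons a t ih => simp [ih]; ring
  have h4 : (l.map fun p => δ * (d p.2 - d p.1)).sum
      ≤ (l.map fun p => (lam p.2 - lam p.1) * (d p.2 - d p.1)).sum := by
    apply List.sum_le_sum
    intro p hpl
    obtain ⟨ha, hb, hc⟩ := hp p hpl
    have : δ ≤ lam p.2 - lam p.1 := le_trans (hgap p.2 hb) (by linarith)
    exact mul_le_mul_of_nonneg_right this (by linarith)
  have h5 : (l.map fun p => (lam p.1 - lam p.2) * (d p.2 - d p.1)).sum
      = -((l.map fun p => (lam p.2 - lam p.1) * (d p.2 - d p.1)).sum) := by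
    rw [← h2 (fun p => (lam p.2 - lam p.1) * (d p.2 - d p.1)) l]
    apply congrArg
    apply List.map_congr_left
    intro p _
    ring
  rw [h5] at h1
  rw [← h3]
  linarith

variable {lam d} in
lemma key1 [DecidableEq J] {C : ℝ}
    (hC : ∀ w : Equiv.Perm J, IsFinPerm w → C ≤ energyA lam d w)
    {δ v : ℝ} (hδ : 0 < δ) (hgap : ∀ j : J, v < lam j → δ ≤ lam j - v)
    (x : ℝ)
    (hgb : ¬ Summable (fun j => if v < lam j then max (d j - x) 0 else 0))
    (hfa : ∀ ε : ℝ, 0 < ε →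
      ¬ Summable (fun i => if lam i ≤ v then max (x + ε - d i) 0 else 0)) :
    False := by
  classical
  set K := max (-C / δ) 0 with hK
  have hK0 : 0 ≤ K := le_max_right _ _
  obtain ⟨s, hs⟩ := unb_of_not_summable
    (g := fun j => if v < lam j then max (d j - x) 0 else 0)
    (fun j => by dsimp only; split_ifs; exacts [le_max_right _ _, le_rfl]) hgb (2 * K + 1)
  set T := s.filter (fun j => v < lam j ∧ x < d j) with hT
  have hTmem : ∀ j ∈ T, v < lam j ∧ x < d j := fun j hj => (Finset.mem_filter.mp hj).2
  have hTsum : 2 * K + 1 < ∑ j ∈ T, (d j - x) := by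
    have e1 : ∑ j ∈ T, (if v < lam j then max (d j - x) 0 else 0)
        = ∑ j ∈ s, (if v < lam j then max (d j - x) 0 else 0) := by
      apply Finset.sum_filter_of_ne
      intro j _ hne
      split_ifs at hne with h
      · refine ⟨h, ?_⟩
        by_contra hc
        push_neg at hc
        rw [max_eq_right (by linarith)] at hne
        exact hne rfl
      · exact absurd rfl hne
    have e2 : ∑ j ∈ T, (if v < lam j then max (d j - x) 0 else 0) = ∑ j ∈ T, (d j - x) := by
      apply Finset.sum_congr rfl
      intro j hj
      obtain ⟨h1, h2⟩ := hTmem j hj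
      rw [if_pos h1, max_eq_left (by linarith)]
    rw [← e2, e1]
    exact hs
  have hTne : T.Nonempty := by
    rcases Finset.eq_empty_or_nonempty T with h | h
    · rw [h, Finset.sum_empty] at hTsum; linarith
    · exact h
  set m := T.inf' hTne (fun j => d j - x) with hm
  have hm0 : 0 < m := by
    rw [hm, Finset.lt_inf'_iff]
    intro j hj
    linarith [(hTmem j hj).2]
  set ε := m / 2 with hεdef
  have hε : 0 < ε := by positivity
  have hinf : {i | lam i ≤ v ∧ d i < x + ε}.Infinite := by
    have h := infinite_of_not_summable (hfa ε hε)
    apply Set.Infinite.mono _ h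
    intro i hi
    simp only [Set.mem_setOf_eq] at hi ⊢
    split_ifs at hi with h1
    · refine ⟨h1, ?_⟩
      by_contra hc
      push_neg at hc
      rw [max_eq_right (by linarith)] at hi
      exact hi rfl
    · exact absurd rfl hi
  obtain ⟨S, hSsub, hScard⟩ := hinf.exists_subset_card_eq T.card
  set l := S.toList.zip T.toList with hl
  have hlen : S.toList.length = T.toList.length := by
    rw [Finset.length_toList, Finset.length_toList, hScard]
  have hfst : l.map Prod.fst = S.toList := List.map_fst_zip (le_of_eq hlen)
  have hsnd : l.map Prod.snd = T.toList := List.map_snd_zip (le_of_eq hlen.symm)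
  have hnd : (l.map Prod.fst ++ l.map Prod.snd).Nodup := by
    rw [hfst, hsnd]
    apply List.Nodup.append (Finset.nodup_toList _) (Finset.nodup_toList _)
    intro a haS haT
    have h1 : lam a ≤ v := (hSsub (Finset.mem_toList.mp haS)).1
    have h2 : v < lam a := (hTmem a (Finset.mem_toList.mp haT)).1
    linarith
  have hpair : ∀ p ∈ l, (lam p.1 ≤ v ∧ d p.1 < x + ε) ∧
      (v < lam p.2 ∧ x < d p.2 ∧ m ≤ d p.2 - x) := by
    intro p hpl
    obtain ⟨hp1, hp2⟩ := List.of_mem_zip hpl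
    have h1 := hSsub (Finset.mem_toList.mp hp1)
    have h2 := hTmem p.2 (Finset.mem_toList.mp hp2)
    exact ⟨h1, h2.1, h2.2, Finset.inf'_le _ (Finset.mem_toList.mp hp2)⟩
  have hmb := matching_bound hC hgap l hnd (fun p hpl => by
    obtain ⟨⟨a1, a2⟩, b1, b2, b3⟩ := hpair p hpl
    exact ⟨a1, b1, by linarith⟩)
  have hcard : (T.card : ℝ) * m ≤ ∑ j ∈ T, (d j - x) := by
    have := Finset.card_nsmul_le_sum T (fun j => d j - x) m
      (fun j hj => Finset.inf'_le _ hj)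
    rwa [nsmul_eq_mul] at this
  have hlb : ∑ j ∈ T, (d j - x) - T.card * ε ≤ (l.map fun p => d p.2 - d p.1).sum := by
    have h1 : (l.map fun p => (d p.2 - x) - ε).sum ≤ (l.map fun p => d p.2 - d p.1).sum := by
      apply List.sum_le_sum
      intro p hpl
      have := (hpair p hpl).1.2
      linarith
    have e1 : (l.map fun p => (d p.2 - x) - ε) = T.toList.map (fun j => (d j - x) - ε) := by
      rw [← hsnd, List.map_map]
      rfl
    have h2 : (l.map fun p => (d p.2 - x) - ε).sum = ∑ j ∈ T, ((d j - x) - ε) := by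
      rw [e1, Finset.sum_map_toList]
    rw [Finset.sum_sub_distrib, Finset.sum_const, nsmul_eq_mul] at h2
    linarith
  have hK1 : δ * (-C / δ) = -C := by field_simp
  have hK2 : δ * (-C / δ) ≤ δ * K := mul_le_mul_of_nonneg_left (le_max_left _ _) hδ.le
  have hc2 : (T.card : ℝ) * ε = ((T.card : ℝ) * m) / 2 := by rw [hεdef]; ring
  have hsum_lb : K + 1 / 2 ≤ (l.map fun p => d p.2 - d p.1).sum := by linarith
  have hfin2 := mul_le_mul_of_nonneg_left hsum_lb hδ.le
  have hexp : δ * (K + 1 / 2) = δ * K + δ / 2 := by ring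
  linarith

variable {lam d} in
lemma key2 [DecidableEq J] {C : ℝ}
    (hC : ∀ w : Equiv.Perm J, IsFinPerm w → C ≤ energyA lam d w)
    {δ v : ℝ} (hδ : 0 < δ) (hgap : ∀ j : J, v < lam j → δ ≤ lam j - v)
    (x : ℝ)
    (hfa : ¬ Summable (fun i => if lam i ≤ v then max (x - d i) 0 else 0))
    (hgb : ∀ ε : ℝ, 0 < ε →
      ¬ Summable (fun j => if v < lam j then max (d j - (x - ε)) 0 else 0)) :
    False := by
  classical
  set K := max (-C / δ) 0 with hK
  have hK0 : 0 ≤ K := le_max_right _ _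
  obtain ⟨s, hs⟩ := unb_of_not_summable
    (g := fun i => if lam i ≤ v then max (x - d i) 0 else 0)
    (fun i => by dsimp only; split_ifs; exacts [le_max_right _ _, le_rfl]) hfa (2 * K + 1)
  set T := s.filter (fun i => lam i ≤ v ∧ d i < x) with hT
  have hTmem : ∀ i ∈ T, lam i ≤ v ∧ d i < x := fun i hi => (Finset.mem_filter.mp hi).2
  have hTsum : 2 * K + 1 < ∑ i ∈ T, (x - d i) := by
    have e1 : ∑ i ∈ T, (if lam i ≤ v then max (x - d i) 0 else 0)
        = ∑ i ∈ s, (if lam i ≤ v then max (x - d i) 0 else 0) := by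
      apply Finset.sum_filter_of_ne
      intro i _ hne
      split_ifs at hne with h
      · refine ⟨h, ?_⟩
        by_contra hc
        push_neg at hc
        rw [max_eq_right (by linarith)] at hne
        exact hne rfl
      · exact absurd rfl hne
    have e2 : ∑ i ∈ T, (if lam i ≤ v then max (x - d i) 0 else 0) = ∑ i ∈ T, (x - d i) := by
      apply Finset.sum_congr rfl
      intro i hi
      obtain ⟨h1, h2⟩ := hTmem i hi
      rw [if_pos h1, max_eq_left (by linarith)]
    rw [← e2, e1]
    exact hs
  have hTne : T.Nonempty := by
    rcases Finset.eq_empty_or_nonempty T with h | h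
    · rw [h, Finset.sum_empty] at hTsum; linarith
    · exact h
  set m := T.inf' hTne (fun i => x - d i) with hm
  have hm0 : 0 < m := by
    rw [hm, Finset.lt_inf'_iff]
    intro i hi
    linarith [(hTmem i hi).2]
  set ε := m / 2 with hεdef
  have hε : 0 < ε := by positivity
  have hinf : {j | v < lam j ∧ x - ε < d j}.Infinite := by
    have h := infinite_of_not_summable (hgb ε hε)
    apply Set.Infinite.mono _ h
    intro j hj
    simp only [Set.mem_setOf_eq] at hj ⊢
    split_ifs at hj with h1
    · refine ⟨h1, ?_⟩
      by_contra hc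
      push_neg at hc
      rw [max_eq_right (by linarith)] at hj
      exact hj rfl
    · exact absurd rfl hj
  obtain ⟨S, hSsub, hScard⟩ := hinf.exists_subset_card_eq T.card
  set l := T.toList.zip S.toList with hl
  have hlen : T.toList.length = S.toList.length := by
    rw [Finset.length_toList, Finset.length_toList, hScard]
  have hfst : l.map Prod.fst = T.toList := List.map_fst_zip (le_of_eq hlen)
  have hsnd : l.map Prod.snd = S.toList := List.map_snd_zip (le_of_eq hlen.symm)
  have hnd : (l.map Prod.fst ++ l.map Prod.snd).Nodup := by
    rw [hfst, hsnd]
    apply List.Nodup.append (Finset.nodup_toList _) (Finset.nodup_toList _)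
    intro a haT haS
    have h1 : lam a ≤ v := (hTmem a (Finset.mem_toList.mp haT)).1
    have h2 : v < lam a := (hSsub (Finset.mem_toList.mp haS)).1
    linarith
  have hpair : ∀ p ∈ l, (lam p.1 ≤ v ∧ d p.1 < x ∧ m ≤ x - d p.1) ∧
      (v < lam p.2 ∧ x - ε < d p.2) := by
    intro p hpl
    obtain ⟨hp1, hp2⟩ := List.of_mem_zip hpl
    have h1 := hTmem p.1 (Finset.mem_toList.mp hp1)
    have h2 := hSsub (Finset.mem_toList.mp hp2)
    exact ⟨⟨h1.1, h1.2, Finset.inf'_le _ (Finset.mem_toList.mp hp1)⟩, h2⟩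
  have hmb := matching_bound hC hgap l hnd (fun p hpl => by
    obtain ⟨⟨a1, a2, a3⟩, b1, b2⟩ := hpair p hpl
    exact ⟨a1, b1, by linarith⟩)
  have hcard : (T.card : ℝ) * m ≤ ∑ i ∈ T, (x - d i) := by
    have := Finset.card_nsmul_le_sum T (fun i => x - d i) m
      (fun i hi => Finset.inf'_le _ hi)
    rwa [nsmul_eq_mul] at this
  have hlb : ∑ i ∈ T, (x - d i) - T.card * ε ≤ (l.map fun p => d p.2 - d p.1).sum := by
    have h1 : (l.map fun p => (x - d p.1) - ε).sum ≤ (l.map fun p => d p.2 - d p.1).sum := by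
      apply List.sum_le_sum
      intro p hpl
      have := (hpair p hpl).2.2
      linarith
    have e1 : (l.map fun p => (x - d p.1) - ε) = T.toList.map (fun i => (x - d i) - ε) := by
      rw [← hfst, List.map_map]
      rfl
    have h2 : (l.map fun p => (x - d p.1) - ε).sum = ∑ i ∈ T, ((x - d i) - ε) := by
      rw [e1, Finset.sum_map_toList]
    rw [Finset.sum_sub_distrib, Finset.sum_const, nsmul_eq_mul] at h2
    linarith
  have hK1 : δ * (-C / δ) = -C := by field_simp
  have hK2 : δ * (-C / δ) ≤ δ * K := mul_le_mul_of_nonneg_left (le_max_left _ _) hδ.le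
  have hc2 : (T.card : ℝ) * ε = ((T.card : ℝ) * m) / 2 := by rw [hεdef]; ring
  have hsum_lb : K + 1 / 2 ≤ (l.map fun p => d p.2 - d p.1).sum := by linarith
  have hfin2 := mul_le_mul_of_nonneg_left hsum_lb hδ.le
  have hexp : δ * (K + 1 / 2) = δ * K + δ / 2 := by ring
  linarith

variable {lam d} in
lemma cut_exists [DecidableEq J] {C : ℝ}
    (hC : ∀ w : Equiv.Perm J, IsFinPerm w → C ≤ energyA lam d w)
    {δ v : ℝ} (hδ : 0 < δ) (hgap : ∀ j : J, v < lam j → δ ≤ lam j - v)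
    (i₀ j₀ : J) (hi₀ : lam i₀ ≤ v) (hj₀ : v < lam j₀) :
    ∃ c : ℝ, Summable (fun i => if lam i ≤ v then max (c - d i) 0 else 0) ∧
      Summable (fun j => if v < lam j then max (d j - c) 0 else 0) := by
  classical
  set K := max (-C / δ) 0 with hKdef
  have hK0 : 0 ≤ K := le_max_right _ _
  have single : ∀ i j : J, lam i ≤ v → v < lam j → d j - d i ≤ K := by
    intro i j hi hj
    by_cases hd : d i < d j
    · have hij : i ≠ j := fun h => by rw [h] at hi; linarith
      have hne : (([(i, j)].map Prod.fst) ++ ([(i, j)].map Prod.snd)).Nodup := by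
        simp [hij]
      have hmb := matching_bound hC hgap [(i, j)] hne (by
        intro p hp
        rw [List.mem_singleton] at hp
        subst hp
        exact ⟨hi, hj, hd⟩)
      simp only [List.map_cons, List.map_nil, List.sum_cons, List.sum_nil, add_zero] at hmb
      have h2 : d j - d i ≤ -C / δ := by
        rw [le_div_iff₀ hδ]
        linarith
      exact h2.trans (le_max_left _ _)
    · push_neg at hd
      linarith
  have FAmono : ∀ c' c : ℝ, c' ≤ c →
      Summable (fun i => if lam i ≤ v then max (c - d i) 0 else 0) →
      Summable (fun i => if lam i ≤ v then max (c' - d i) 0 else 0) := by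
    intro c' c hcc hsum
    apply Summable.of_nonneg_of_le (fun i => ?_) (fun i => ?_) hsum
    · split_ifs; exacts [le_max_right _ _, le_rfl]
    · split_ifs
      · exact max_le_max (by linarith) le_rfl
      · exact le_rfl
  have GBmono : ∀ c c' : ℝ, c ≤ c' →
      Summable (fun j => if v < lam j then max (d j - c) 0 else 0) →
      Summable (fun j => if v < lam j then max (d j - c') 0 else 0) := by
    intro c c' hcc hsum
    apply Summable.of_nonneg_of_le (fun j => ?_) (fun j => ?_) hsum
    · split_ifs; exacts [le_max_right _ _, le_rfl]
    · split_ifs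
      · exact max_le_max (by linarith) le_rfl
      · exact le_rfl
  have hFA0 : Summable (fun i => if lam i ≤ v then max ((d j₀ - K) - d i) 0 else 0) := by
    have he : (fun i => if lam i ≤ v then max ((d j₀ - K) - d i) 0 else 0) = fun _ => 0 := by
      funext i
      split_ifs with h
      · rw [max_eq_right]
        have := single i j₀ h hj₀
        linarith
      · rfl
    rw [he]
    exact summable_zero
  have hGB0 : Summable (fun j => if v < lam j then max (d j - (d i₀ + K)) 0 else 0) := by
    have he : (fun j => if v < lam j then max (d j - (d i₀ + K)) 0 else 0) = fun _ => 0 := by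
      funext j
      split_ifs with h
      · rw [max_eq_right]
        have := single i₀ j hi₀ h
        linarith
      · rfl
    rw [he]
    exact summable_zero
  by_cases hall : ∀ c : ℝ, Summable (fun i => if lam i ≤ v then max (c - d i) 0 else 0)
  · exact ⟨d i₀ + K, hall _, hGB0⟩
  push_neg at hall
  obtain ⟨c₀, hc₀⟩ := hall
  set F := {c : ℝ | Summable (fun i => if lam i ≤ v then max (c - d i) 0 else 0)} with hF
  have hFne : F.Nonempty := ⟨d j₀ - K, hFA0⟩
  have hFbdd : BddAbove F := by
    refine ⟨c₀, fun c hc => ?_⟩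
    by_contra h
    push_neg at h
    exact hc₀ (FAmono c₀ c h.le hc)
  set x := sSup F with hx
  by_cases hgx : Summable (fun j => if v < lam j then max (d j - x) 0 else 0)
  · by_cases hfx : Summable (fun i => if lam i ≤ v then max (x - d i) 0 else 0)
    · exact ⟨x, hfx, hgx⟩
    · by_cases hex : ∃ ε : ℝ, 0 < ε ∧
          Summable (fun j => if v < lam j then max (d j - (x - ε)) 0 else 0)
      · obtain ⟨ε, hε, hgb⟩ := hex
        obtain ⟨y, hyF, hy⟩ := exists_lt_of_lt_csSup hFne (by linarith : x - ε < x)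
        exact ⟨x - ε, FAmono _ y hy.le hyF, hgb⟩
      · push_neg at hex
        exact absurd (key2 hC hδ hgap x hfx hex) id
  · exfalso
    apply key1 hC hδ hgap x hgx
    intro ε hε hfa
    have hmem : x + ε ∈ F := hfa
    have := le_csSup hFbdd hmem
    linarith

lemma clamp_est (x h l : ℝ) : |x - max (min x h) l| ≤ max (x - h) 0 + max (l - x) 0 := by
  have m1 := le_max_left (x - h) (0 : ℝ)
  have m2 := le_max_right (x - h) (0 : ℝ)
  have m3 := le_max_left (l - x) (0 : ℝ)
  have m4 := le_max_right (l - x) (0 : ℝ)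
  rcases le_total x h with h1 | h1
  · rw [min_eq_left h1]
    rcases le_total x l with h2 | h2
    · rw [max_eq_right h2, abs_of_nonpos (by linarith)]
      linarith
    · rw [max_eq_left h2, sub_self, abs_zero]
      linarith
  · rw [min_eq_right h1]
    rcases le_total h l with h2 | h2
    · rw [max_eq_right h2]
      rcases le_total x l with h3 | h3
      · rw [abs_of_nonpos (by linarith)]
        linarith
      · rw [abs_of_nonneg (by linarith)]
        linarith
    · rw [max_eq_left h2, abs_of_nonneg (by linarith)]
      linarith

noncomputable def hiF (V : Finset ℝ) (t : ℝ → ℝ) (a x : ℝ) : ℝ :=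
  (insert x ((V.filter (fun w => w < a)).image t)).min' (Finset.insert_nonempty _ _)

noncomputable def loF (V : Finset ℝ) (t : ℝ → ℝ) (a x : ℝ) : ℝ :=
  (insert (if a ∈ V then t a else min x (hiF V t a x))
    ((V.filter (fun w => w ≤ a)).image t)).min' (Finset.insert_nonempty _ _)

noncomputable def d0F (V : Finset ℝ) (t : ℝ → ℝ) (a x : ℝ) : ℝ :=
  max (min x (hiF V t a x)) (loF V t a x)

lemma hiF_le {V : Finset ℝ} {t : ℝ → ℝ} {a w : ℝ} (x : ℝ) (hw : w ∈ V) (hlt : w < a) :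
    hiF V t a x ≤ t w := by
  unfold hiF
  apply Finset.min'_le
  simp only [Finset.mem_insert, Finset.mem_image, Finset.mem_filter]
  exact Or.inr ⟨w, ⟨hw, hlt⟩, rfl⟩

lemma hiF_cases (V : Finset ℝ) (t : ℝ → ℝ) (a x : ℝ) :
    hiF V t a x = x ∨ ∃ w ∈ V, w < a ∧ hiF V t a x = t w := by
  have : hiF V t a x ∈ insert x ((V.filter (fun w => w < a)).image t) := by
    unfold hiF
    exact Finset.min'_mem _ _
  rw [Finset.mem_insert] at this
  rcases this with h | h
  · exact Or.inl h
  · obtain ⟨w, hw, hweq⟩ := Finset.mem_image.mp h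
    rw [Finset.mem_filter] at hw
    exact Or.inr ⟨w, hw.1, hw.2, hweq.symm⟩

lemma loF_le_t {V : Finset ℝ} {t : ℝ → ℝ} {a w : ℝ} (x : ℝ) (hw : w ∈ V) (hle : w ≤ a) :
    loF V t a x ≤ t w := by
  unfold loF
  apply Finset.min'_le
  simp only [Finset.mem_insert, Finset.mem_image, Finset.mem_filter]
  exact Or.inr ⟨w, ⟨hw, hle⟩, rfl⟩

lemma loF_le_x {V : Finset ℝ} {t : ℝ → ℝ} {a : ℝ} (x : ℝ) (ha : a ∉ V) :
    loF V t a x ≤ x := by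
  have h1 : loF V t a x ≤ (if a ∈ V then t a else min x (hiF V t a x)) := by
    unfold loF
    exact Finset.min'_le _ _ (Finset.mem_insert_self _ _)
  rw [if_neg ha] at h1
  exact h1.trans (min_le_left _ _)

lemma le_loF {V : Finset ℝ} {t : ℝ → ℝ} {a : ℝ} (x : ℝ) (ha : a ∈ V) {y : ℝ}
    (hy : ∀ w ∈ V, w ≤ a → y ≤ t w) : y ≤ loF V t a x := by
  unfold loF
  apply Finset.le_min'
  intro z hz
  rw [Finset.mem_insert] at hz
  rcases hz with h | h
  · rw [h, if_pos ha]
    exact hy a ha le_rfl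
  · obtain ⟨w, hw, hweq⟩ := Finset.mem_image.mp h
    rw [Finset.mem_filter] at hw
    exact hweq ▸ hy w hw.1 hw.2

variable {lam d} in
lemma construct (V : Finset ℝ) (t : ℝ → ℝ)
    (hV : ∀ i j : J, lam i < lam j → lam i ∈ V)
    (ht1 : ∀ v ∈ V, Summable (fun i => if lam i ≤ v then max (t v - d i) 0 else 0))
    (ht2 : ∀ v ∈ V, Summable (fun j => if v < lam j then max (d j - t v) 0 else 0)) :
    ∃ d0 d1 : J → ℝ, (∀ j, d j = d0 j + d1 j) ∧ (Summable fun j => |d1 j|) ∧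
      ∀ i j : J, lam i < lam j → d0 j ≤ d0 i := by
  classical
  refine ⟨fun j => d0F V t (lam j) (d j), fun j => d j - d0F V t (lam j) (d j),
    fun j => by ring, ?_, ?_⟩
  · have hg1 : Summable (fun j : J => ∑ w ∈ V, (if w < lam j then max (d j - t w) 0 else 0)) :=
      summable_sum (fun w hw => ht2 w hw)
    have hg2 : Summable (fun j : J => ∑ w ∈ V, (if lam j ≤ w then max (t w - d j) 0 else 0)) :=
      summable_sum (fun w hw => ht1 w hw)
    have bound1 : ∀ j : J, max (d j - hiF V t (lam j) (d j)) 0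
        ≤ ∑ w ∈ V, (if w < lam j then max (d j - t w) 0 else 0) := by
      intro j
      have hnn : ∀ w ∈ V, 0 ≤ (if w < lam j then max (d j - t w) 0 else 0) := by
        intro w _
        split_ifs
        exacts [le_max_right _ _, le_rfl]
      rcases hiF_cases V t (lam j) (d j) with h | ⟨w, hwV, hwlt, hweq⟩
      · rw [h, sub_self, max_self]
        exact Finset.sum_nonneg hnn
      · rw [hweq]
        calc max (d j - t w) 0 = (if w < lam j then max (d j - t w) 0 else 0) := by
              rw [if_pos hwlt]
          _ ≤ _ := Finset.single_le_sum hnn hwV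
    have bound2 : ∀ j : J, max (loF V t (lam j) (d j) - d j) 0
        ≤ ∑ w ∈ V, (if lam j ≤ w then max (t w - d j) 0 else 0) := by
      intro j
      have hnn : ∀ w ∈ V, 0 ≤ (if lam j ≤ w then max (t w - d j) 0 else 0) := by
        intro w _
        split_ifs
        exacts [le_max_right _ _, le_rfl]
      by_cases ha : lam j ∈ V
      · calc max (loF V t (lam j) (d j) - d j) 0
            ≤ max (t (lam j) - d j) 0 :=
              max_le_max (sub_le_sub_right (loF_le_t (d j) ha le_rfl) _) le_rfl
          _ = (if lam j ≤ lam j then max (t (lam j) - d j) 0 else 0) := by rw [if_pos le_rfl]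
          _ ≤ _ := Finset.single_le_sum hnn ha
      · rw [max_eq_right (by linarith [loF_le_x (t := t) (d j) ha])]
        exact Finset.sum_nonneg hnn
    apply Summable.of_nonneg_of_le (fun j => abs_nonneg _) (fun j => ?_) (hg1.add hg2)
    calc |d j - d0F V t (lam j) (d j)|
        ≤ max (d j - hiF V t (lam j) (d j)) 0 + max (loF V t (lam j) (d j) - d j) 0 :=
          clamp_est _ _ _
      _ ≤ _ := add_le_add (bound1 j) (bound2 j)
  · intro i j hij
    have haV : lam i ∈ V := hV i j hij
    have h1 : d0F V t (lam j) (d j) ≤ loF V t (lam i) (d i) := by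
      apply le_loF _ haV
      intro w hwV hwle
      have hwlt : w < lam j := lt_of_le_of_lt hwle hij
      apply max_le
      · exact (min_le_right _ _).trans (hiF_le (d j) hwV hwlt)
      · exact loF_le_t (d j) hwV hwlt.le
    exact h1.trans (le_max_right _ _)

end PecaAux

theorem pecA_characterisation (J : Type*) [Infinite J] (lam d : J → ℝ)
    (hfin : (Set.range lam).Finite) :
    PECA lam d ↔
      ∃ d₀ d₁ : J → ℝ, (∀ j, d j = d₀ j + d₁ j) ∧ (Summable fun j => |d₁ j|) ∧
        ∀ i j : J, lam i < lam j → d₀ j ≤ d₀ i := by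
  classical
  constructor
  · rintro ⟨C, hC⟩
    set Rf := hfin.toFinset with hRfdef
    have hRf : ∀ j, lam j ∈ Rf := fun j => hfin.mem_toFinset.2 ⟨j, rfl⟩
    set Vf := Rf.filter (fun v => ∃ u ∈ Rf, v < u) with hVfdef
    have hex : ∀ v : ℝ, ∃ c : ℝ, v ∈ Vf →
        (Summable (fun i => if lam i ≤ v then max (c - d i) 0 else 0) ∧
         Summable (fun j => if v < lam j then max (d j - c) 0 else 0)) := by
      intro v
      by_cases hv : v ∈ Vf
      · have hv' := hv
        rw [hVfdef, Finset.mem_filter] at hv'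
        obtain ⟨hvR, u, huR, hvu⟩ := hv'
        obtain ⟨i₀, hi₀⟩ : ∃ i, lam i = v := by
          rwa [hRfdef, Set.Finite.mem_toFinset, Set.mem_range] at hvR
        obtain ⟨j₀, hj₀⟩ : ∃ j, lam j = u := by
          rwa [hRfdef, Set.Finite.mem_toFinset, Set.mem_range] at huR
        have hSune : (Rf.filter (fun w => v < w)).Nonempty :=
          ⟨u, Finset.mem_filter.2 ⟨huR, hvu⟩⟩
        set δ := (Rf.filter (fun w => v < w)).inf' hSune (fun w => w - v) with hδdef
        have hδ : 0 < δ := by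
          rw [hδdef, Finset.lt_inf'_iff]
          intro w hw
          have := (Finset.mem_filter.mp hw).2
          linarith
        have hgap : ∀ j : J, v < lam j → δ ≤ lam j - v := by
          intro j hj
          exact Finset.inf'_le _ (Finset.mem_filter.2 ⟨hRf j, hj⟩)
        obtain ⟨c, h1, h2⟩ := PecaAux.cut_exists hC hδ hgap i₀ j₀ (le_of_eq hi₀)
          (by rw [hj₀]; exact hvu)
        exact ⟨c, fun _ => ⟨h1, h2⟩⟩
      · exact ⟨0, fun h => absurd h hv⟩
    choose t ht using hex
    apply PecaAux.construct Vf t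
    · intro i j hij
      rw [hVfdef, Finset.mem_filter]
      exact ⟨hRf i, lam j, hRf j, hij⟩
    · intro v hv
      exact (ht v hv).1
    · intro v hv
      exact (ht v hv).2
  · rintro ⟨d0, d1, hsum, hl1, hmono⟩
    have hJne : Nonempty J := inferInstance
    set Rf := hfin.toFinset with hRfdef
    have hRne : Rf.Nonempty := ⟨lam (Classical.arbitrary J), hfin.mem_toFinset.2 ⟨_, rfl⟩⟩
    set M := Rf.sup' hRne (fun y => |y|) with hMdef
    have hM : ∀ j, |lam j| ≤ M := fun j =>
      Finset.le_sup' _ (hfin.mem_toFinset.2 ⟨j, rfl⟩)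
    have hM0 : 0 ≤ M := le_trans (abs_nonneg _) (hM (Classical.arbitrary J))
    set T := ∑' j, |d1 j| with hTdef
    have hT0 : 0 ≤ T := tsum_nonneg (fun j => abs_nonneg _)
    refine ⟨-(2 * M * T), ?_⟩
    intro w hw
    have hsub : {j | w j ≠ j} ⊆ ↑hw.toFinset := fun j hj => hw.mem_toFinset.2 hj
    rw [PecaAux.energyA_eq_sum lam d w hw.toFinset (fun j hj => hw.mem_toFinset.2 hj)]
    set s := hw.toFinset
    have hsplit : ∑ j ∈ s, lam j * (d (w j) - d j)
        = (∑ j ∈ s, lam j * (d0 (w j) - d0 j)) + ∑ j ∈ s, lam j * (d1 (w j) - d1 j) := by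
      rw [← Finset.sum_add_distrib]
      apply Finset.sum_congr rfl
      intro j _
      rw [hsum j, hsum (w j)]
      ring
    have hterm0 : 0 ≤ ∑ j ∈ s, lam j * (d0 (w j) - d0 j) := by
      have hav : AntivaryOn lam d0 ↑s := by
        intro i _ j _ hij
        by_contra hc
        push_neg at hc
        exact absurd hij (not_lt.2 (hmono i j hc))
      have h1 := hav.sum_mul_le_sum_mul_comp_perm (σ := w) hsub
      have h2 : ∑ j ∈ s, lam j * (d0 (w j) - d0 j)
          = (∑ j ∈ s, lam j * d0 (w j)) - ∑ j ∈ s, lam j * d0 j := by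
        rw [← Finset.sum_sub_distrib]
        apply Finset.sum_congr rfl
        intro j _
        ring
      rw [h2]
      linarith
    have hterm1 : |∑ j ∈ s, lam j * (d1 (w j) - d1 j)| ≤ 2 * M * T := by
      have habs : ∀ j ∈ s, |lam j * (d1 (w j) - d1 j)| ≤ M * (|d1 (w j)| + |d1 j|) := by
        intro j _
        rw [abs_mul]
        have h3 : |d1 (w j) - d1 j| ≤ |d1 (w j)| + |d1 j| := by
          calc |d1 (w j) - d1 j| = |d1 (w j) + -(d1 j)| := by rw [sub_eq_add_neg]
            _ ≤ |d1 (w j)| + |-(d1 j)| := abs_add_le _ _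
            _ = |d1 (w j)| + |d1 j| := by rw [abs_neg]
        exact mul_le_mul (hM j) h3 (abs_nonneg _) hM0
      have hsum1 : ∑ j ∈ s, |d1 (w j)| = ∑ j ∈ s, |d1 j| :=
        Equiv.Perm.sum_comp w s (fun j => |d1 j|) hsub
      have hpart : ∑ j ∈ s, |d1 j| ≤ T :=
        Summable.sum_le_tsum s (fun j _ => abs_nonneg _) hl1
      calc |∑ j ∈ s, lam j * (d1 (w j) - d1 j)|
          ≤ ∑ j ∈ s, |lam j * (d1 (w j) - d1 j)| := Finset.abs_sum_le_sum_abs _ _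
        _ ≤ ∑ j ∈ s, M * (|d1 (w j)| + |d1 j|) := Finset.sum_le_sum habs
        _ = M * ((∑ j ∈ s, |d1 (w j)|) + ∑ j ∈ s, |d1 j|) := by
            rw [← Finset.mul_sum, Finset.sum_add_distrib]
        _ = M * ((∑ j ∈ s, |d1 j|) + ∑ j ∈ s, |d1 j|) := by rw [hsum1]
        _ ≤ M * (T + T) := by
            apply mul_le_mul_of_nonneg_left _ hM0
            linarith
        _ = 2 * M * T := by ring
    have := neg_abs_le (∑ j ∈ s, lam j * (d1 (w j) - d1 j))
    rw [hsplit]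
    linarith
end

section
/- Let $J$ be an infinite set, $\lambda=(\lambda_j)_{j\in J}\in\mathbb{R}^J$ with finite range, and $\chi=(d_j)_{j\in J}\in\mathbb{R}^J$. Then the following are equivalent: (1) $(J,\lambda,\chi)$ satisfies the positive energy condition for $W(B_J)$: the infimum over finitely supported permutations $w$ of $J$ and finitely supported sign functions $\sigma$ of $\sum_j\lambda_j(\sigma_jd_{w(j)}-d_j)$ is finite; (2) $\chi=\chi_0+\chi_1$ where $\chi_1\in\ell^1(J)$ and $\chi_0=(d'_j)$ satisfies $\lambda_jd'_j\le0$ for all $j$ and $|\lambda_i|<|\lambda_j|\implies|d'_i|\le|d'_j|$ for all $i,j\in J$. -/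
open scoped BigOperators

section Aux

variable {J : Type*}

lemma energyB_eq_sum (lam d σ : J → ℝ) (w : Equiv.Perm J) (S : Finset J)
    (hσ : ∀ j, j ∉ S → σ j = 1) (hw : ∀ j, j ∉ S → w j = j) :
    energyB lam d σ w = ∑ j ∈ S, lam j * (σ j * d (w j) - d j) := by
  refine finsum_eq_sum_of_support_subset _ ?_
  intro j hj
  by_contra hjS
  simp only [Function.mem_support] at hj
  rw [hσ j hjS, hw j hjS] at hj
  simp at hj

lemma exists_injOn_mem (T : Finset J) (U : J → Set J) (hU : ∀ x ∈ T, (U x).Infinite) :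
    ∃ f : J → J, Set.InjOn f ↑T ∧ ∀ x ∈ T, f x ∈ U x := by
  classical
  induction T using Finset.induction_on with
  | empty => exact ⟨id, by simp, by simp⟩
  | @insert a s ha ih =>
    obtain ⟨f, hf1, hf2⟩ := ih (fun x hx => hU x (Finset.mem_insert_of_mem hx))
    obtain ⟨y, hy⟩ :=
      ((hU a (Finset.mem_insert_self a s)).diff (s.image f).finite_toSet).nonempty
    refine ⟨Function.update f a y, ?_, ?_⟩
    · intro x₁ h₁ x₂ h₂ heq
      simp only [Finset.coe_insert, Set.mem_insert_iff, Finset.mem_coe] at h₁ h₂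
      rcases h₁ with rfl | h₁ <;> rcases h₂ with rfl | h₂
      · rfl
      · exfalso
        rw [Function.update_self, Function.update_of_ne (by intro h; exact ha (h ▸ h₂))] at heq
        exact hy.2 (Finset.mem_coe.2 (Finset.mem_image.2 ⟨x₂, h₂, heq.symm⟩))
      · exfalso
        rw [Function.update_self, Function.update_of_ne (by intro h; exact ha (h ▸ h₁))] at heq
        exact hy.2 (Finset.mem_coe.2 (Finset.mem_image.2 ⟨x₁, h₁, heq⟩))
      · rw [Function.update_of_ne (by intro h; exact ha (h ▸ h₁)),
          Function.update_of_ne (by intro h; exact ha (h ▸ h₂))] at heq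
        exact hf1 (Finset.mem_coe.2 h₁) (Finset.mem_coe.2 h₂) heq
    · intro x hx
      rcases Finset.mem_insert.1 hx with rfl | hx
      · rw [Function.update_self]; exact hy.1
      · rw [Function.update_of_ne (by intro h; exact ha (h ▸ hx))]; exact hf2 x hx

lemma not_summable_exists_sum {g : J → ℝ} (hg : ∀ j, 0 ≤ g j) (h : ¬ Summable g) (N : ℝ) :
    ∃ F : Finset J, N ≤ ∑ j ∈ F, g j := by
  by_contra hcon
  push_neg at hcon
  exact h (summable_of_sum_le hg (fun F => (hcon F).le))

lemma not_summable_support_infinite {g : J → ℝ} (h : ¬ Summable g) :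
    (Function.support g).Infinite := by
  by_contra hfin
  rw [Set.not_infinite] at hfin
  exact h (summable_of_finite_support hfin)

lemma neg_eq_abs_sub_two_max (z : ℝ) : -z = |z| - 2 * max z 0 := by
  rcases le_or_gt z 0 with h | h
  · rw [abs_of_nonpos h, max_eq_right h]; ring
  · rw [abs_of_pos h, max_eq_left h.le]; ring

/-- The key per-pair inequality. -/
lemma pair_term_le (a A b B : ℝ) :
    (-|a * B| - a * A) + (-|b * A| - b * B) ≤ (|b| - |a|) * (|B| - |A|) := by
  have h1 : -(a * A) ≤ |a| * |A| := by rw [← abs_mul]; exact neg_le_abs _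
  have h2 : -(b * B) ≤ |b| * |B| := by rw [← abs_mul]; exact neg_le_abs _
  rw [abs_mul, abs_mul]
  nlinarith [abs_nonneg a, abs_nonneg b, abs_nonneg A, abs_nonneg B]

end Aux

section Pairs

variable {J : Type*}

/-- Energy bound for a disjoint family of transpositions with optimal signs. -/
lemma pairs_energy (lam d : J → ℝ) {C : ℝ}
    (hC : ∀ (σ : J → ℝ) (w : Equiv.Perm J), IsSign σ → IsFinPerm w → C ≤ energyB lam d σ w)
    (T : Finset J) (f : J → J) (hinj : Set.InjOn f ↑T) (hfT : ∀ x ∈ T, f x ∉ T) :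
    C ≤ ∑ x ∈ T, (|lam (f x)| - |lam x|) * (|d (f x)| - |d x|) := by
  classical
  set g : J → J := fun y => if y ∈ T then f y else if h : ∃ x ∈ T, f x = y then h.choose else y
    with hgdef
  have hg1 : ∀ x ∈ T, g x = f x := fun x hx => by simp only [hgdef, if_pos hx]
  have hg2 : ∀ x ∈ T, g (f x) = x := by
    intro x hx
    have hfx : f x ∉ T := hfT x hx
    have hex : ∃ x' ∈ T, f x' = f x := ⟨x, hx, rfl⟩
    simp only [hgdef, if_neg hfx, dif_pos hex]
    exact hinj (Finset.mem_coe.2 hex.choose_spec.1) (Finset.mem_coe.2 hx) hex.choose_spec.2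
  have hg3 : ∀ y, y ∉ T → (¬ ∃ x ∈ T, f x = y) → g y = y := by
    intro y hy hex
    simp only [hgdef, if_neg hy, dif_neg hex]
  have hginv : Function.Involutive g := by
    intro y
    by_cases hy : y ∈ T
    · rw [hg1 y hy]; exact hg2 y hy
    · by_cases hex : ∃ x ∈ T, f x = y
      · have : g y = hex.choose := by simp only [hgdef, if_neg hy, dif_pos hex]
        rw [this, hg1 _ hex.choose_spec.1, hex.choose_spec.2]
      · rw [hg3 y hy hex, hg3 y hy hex]
  set w : Equiv.Perm J := hginv.toPerm g with hwdef
  have hwg : ∀ y, w y = g y := fun y => rfl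
  set S : Finset J := T ∪ T.image f with hSdef
  have hTS : T ⊆ S := Finset.subset_union_left
  have hSg : ∀ y, y ∉ S → g y = y := by
    intro y hy
    rw [Finset.mem_union] at hy
    push_neg at hy
    refine hg3 y hy.1 ?_
    rintro ⟨x, hx, rfl⟩
    exact hy.2 (Finset.mem_image.2 ⟨x, hx, rfl⟩)
  set σ : J → ℝ := fun y => if y ∈ S then (if 0 < lam y * d (g y) then (-1:ℝ) else 1) else 1
    with hσdef
  have hσsign : IsSign σ := by
    constructor
    · intro j
      simp only [hσdef]
      split_ifs <;> simp
    · refine Set.Finite.subset S.finite_toSet ?_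
      intro j hj
      simp only [Set.mem_setOf_eq, hσdef] at hj
      by_contra hjS
      rw [if_neg (by simpa using hjS)] at hj
      exact hj rfl
  have hwfin : IsFinPerm w := by
    refine Set.Finite.subset S.finite_toSet ?_
    intro j hj
    simp only [Set.mem_setOf_eq, hwg] at hj
    by_contra hjS
    exact hj (hSg j hjS)
  have he := hC σ w hσsign hwfin
  rw [energyB_eq_sum lam d σ w S
      (fun j hj => by simp only [hσdef, if_neg hj])
      (fun j hj => by rw [hwg]; exact hSg j hj)] at he
  have hterm : ∀ y ∈ S, lam y * (σ y * d (w y) - d y) = -|lam y * d (g y)| - lam y * d y := by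
    intro y hy
    rw [hwg]
    simp only [hσdef, if_pos hy]
    rcases lt_or_ge 0 (lam y * d (g y)) with h | h
    · rw [if_pos h, abs_of_pos h]; ring
    · rw [if_neg (not_lt.2 h), abs_of_nonpos h]; ring
  rw [Finset.sum_congr rfl hterm] at he
  have hdisj : Disjoint T (T.image f) := by
    rw [Finset.disjoint_left]
    intro a haT haI
    obtain ⟨x, hx, rfl⟩ := Finset.mem_image.1 haI
    exact hfT x hx haT
  rw [hSdef, Finset.sum_union hdisj,
      Finset.sum_image (fun x hx y hy h => hinj (Finset.mem_coe.2 hx) (Finset.mem_coe.2 hy) h)]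
      at he
  have hsum : ∑ x ∈ T, (-|lam x * d (g x)| - lam x * d x)
      + ∑ x ∈ T, (-|lam (f x) * d (g (f x))| - lam (f x) * d (f x))
      ≤ ∑ x ∈ T, (|lam (f x)| - |lam x|) * (|d (f x)| - |d x|) := by
    rw [← Finset.sum_add_distrib]
    refine Finset.sum_le_sum ?_
    intro x hx
    rw [hg1 x hx, hg2 x hx]
    exact pair_term_le (lam x) (d x) (lam (f x)) (d (f x))
  exact he.trans hsum

/-- Summability of the positive part of `lam * d` from the positive energy condition. -/
lemma pos_part_summable (lam d : J → ℝ) {C : ℝ}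
    (hC : ∀ (σ : J → ℝ) (w : Equiv.Perm J), IsSign σ → IsFinPerm w → C ≤ energyB lam d σ w) :
    Summable (fun j => max (lam j * d j) 0) := by
  classical
  refine summable_of_sum_le (c := -C/2) (fun j => le_max_right _ _) ?_
  intro u
  set F : Finset J := u.filter (fun j => 0 < lam j * d j) with hFdef
  set σ : J → ℝ := fun j => if j ∈ F then (-1:ℝ) else 1 with hσdef
  have hσsign : IsSign σ := by
    constructor
    · intro j; simp only [hσdef]; split_ifs <;> simp
    · refine Set.Finite.subset F.finite_toSet ?_
      intro j hj
      simp only [Set.mem_setOf_eq, hσdef] at hj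
      by_contra hjF
      rw [if_neg (by simpa using hjF)] at hj
      exact hj rfl
  have hwfin : IsFinPerm (1 : Equiv.Perm J) := by
    refine Set.Finite.subset (Set.finite_empty) ?_
    intro j hj
    simp at hj
  have he := hC σ 1 hσsign hwfin
  rw [energyB_eq_sum lam d σ 1 F (fun j hj => by simp only [hσdef, if_neg hj])
      (fun j hj => rfl)] at he
  have : ∑ j ∈ F, lam j * (σ j * d ((1 : Equiv.Perm J) j) - d j)
      = ∑ j ∈ F, (-2 * (lam j * d j)) := by
    refine Finset.sum_congr rfl ?_
    intro j hj
    simp only [hσdef, if_pos hj, Equiv.Perm.coe_one, id_eq]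
    ring
  rw [this, Finset.sum_congr rfl (fun j _ => by ring : ∀ j ∈ F, (-2 : ℝ) * (lam j * d j) = -(2 * (lam j * d j))),
      Finset.sum_neg_distrib, ← Finset.mul_sum] at he
  have hFsum : ∑ j ∈ F, lam j * d j ≤ -C/2 := by linarith
  calc ∑ j ∈ u, max (lam j * d j) 0 = ∑ j ∈ F, lam j * d j := by
        rw [hFdef, Finset.sum_filter]
        refine Finset.sum_congr rfl ?_
        intro j _
        rcases lt_or_ge 0 (lam j * d j) with h | h
        · rw [if_pos h, max_eq_left h.le]
        · rw [if_neg (not_lt.2 h), max_eq_right h]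
    _ ≤ -C/2 := hFsum

end Pairs

section TwoLevel

variable {J : Type*}

open Classical in
/-- Excess of `|d|` above `t` on the level `{j | |lam j| = v}`. -/
noncomputable def auxE (lam d : J → ℝ) (v t : ℝ) (j : J) : ℝ :=
  if |lam j| = v then max (|d j| - t) 0 else 0

open Classical in
/-- Deficiency of `|d|` below `t` on the level `{j | |lam j| = v}`. -/
noncomputable def auxD (lam d : J → ℝ) (v t : ℝ) (j : J) : ℝ :=
  if |lam j| = v then max (t - |d j|) 0 else 0

lemma auxE_nonneg (lam d : J → ℝ) (v t : ℝ) (j : J) : 0 ≤ auxE lam d v t j := by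
  unfold auxE; split_ifs <;> simp [le_max_right]

lemma auxD_nonneg (lam d : J → ℝ) (v t : ℝ) (j : J) : 0 ≤ auxD lam d v t j := by
  unfold auxD; split_ifs <;> simp [le_max_right]

lemma auxE_mono (lam d : J → ℝ) (v : ℝ) {t t' : ℝ} (h : t ≤ t') (j : J) :
    auxE lam d v t' j ≤ auxE lam d v t j := by
  unfold auxE; split_ifs with h1
  · exact max_le_max (by linarith) le_rfl
  · exact le_rfl

lemma auxD_mono (lam d : J → ℝ) (v : ℝ) {t t' : ℝ} (h : t ≤ t') (j : J) :
    auxD lam d v t j ≤ auxD lam d v t' j := by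
  unfold auxD; split_ifs with h1
  · exact max_le_max (by linarith) le_rfl
  · exact le_rfl

lemma auxE_summable_of_le (lam d : J → ℝ) (v : ℝ) {t t' : ℝ} (h : t ≤ t')
    (hs : Summable (auxE lam d v t)) : Summable (auxE lam d v t') :=
  Summable.of_nonneg_of_le (auxE_nonneg lam d v t') (auxE_mono lam d v h) hs

lemma auxD_summable_of_le (lam d : J → ℝ) (v : ℝ) {t t' : ℝ} (h : t ≤ t')
    (hs : Summable (auxD lam d v t')) : Summable (auxD lam d v t) :=
  Summable.of_nonneg_of_le (auxD_nonneg lam d v t) (auxD_mono lam d v h) hs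

lemma auxD_zero_summable (lam d : J → ℝ) (v : ℝ) : Summable (auxD lam d v 0) := by
  have : auxD lam d v 0 = fun _ => 0 := by
    funext j
    unfold auxD
    split_ifs with h1
    · rw [max_eq_right (by simpa using abs_nonneg (d j))]
    · rfl
  rw [this]
  exact summable_zero

lemma auxE_support_mem {lam d : J → ℝ} {v t : ℝ} {j : J} (h : auxE lam d v t j ≠ 0) :
    |lam j| = v ∧ t < |d j| := by
  unfold auxE at h
  split_ifs at h with h1
  · refine ⟨h1, ?_⟩
    by_contra hc
    push_neg at hc
    rw [max_eq_right (by linarith)] at h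
    exact h rfl
  · exact absurd rfl h

lemma auxD_support_mem {lam d : J → ℝ} {v t : ℝ} {j : J} (h : auxD lam d v t j ≠ 0) :
    |lam j| = v ∧ |d j| < t := by
  unfold auxD at h
  split_ifs at h with h1
  · refine ⟨h1, ?_⟩
    by_contra hc
    push_neg at hc
    rw [max_eq_right (by linarith)] at h
    exact h rfl
  · exact absurd rfl h

/-- The two-level threshold lemma: between any two levels there is a threshold whose
excess below and deficiency above are summable. -/
lemma two_level (lam d : J → ℝ) {C : ℝ}
    (hC : ∀ (σ : J → ℝ) (w : Equiv.Perm J), IsSign σ → IsFinPerm w → C ≤ energyB lam d σ w)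
    {u u' : ℝ} (hu' : ∃ y, |lam y| = u') (hlt : u < u') :
    ∃ t, 0 ≤ t ∧ Summable (auxE lam d u t) ∧ Summable (auxD lam d u' t) := by
  classical
  set K : ℝ := max 0 (-C / (u' - u)) with hKdef
  have hgap : 0 < u' - u := by linarith
  have hK0 : 0 ≤ K := le_max_left _ _
  have harith : -((u' - u) * (K + 1)) < C := by
    have h1 : -C / (u' - u) ≤ K := le_max_right _ _
    have h2 : -C ≤ (u' - u) * K := by
      rw [div_le_iff₀ hgap] at h1
      linarith [h1]
    nlinarith
  -- a single unbalanced pair contradicts the energy bound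
  have hpair : ∀ x y : J, |lam x| = u → |lam y| = u' → |d y| + K + 1 ≤ |d x| → False := by
    intro x y hx hy hxy
    have hne : y ≠ x := by
      intro h; rw [h, hx] at hy; exact absurd hy (by linarith)
    have hinj : Set.InjOn (fun _ => y) (({x} : Finset J) : Set J) := by
      intro a ha a' ha' _; simp at ha ha'; rw [ha, ha']
    have hfT : ∀ z ∈ ({x} : Finset J), (fun _ => y) z ∉ ({x} : Finset J) := by
      intro z _; simp [hne]
    have := pairs_energy lam d hC ({x} : Finset J) (fun _ => y) hinj hfT
    simp only [Finset.sum_singleton, hx, hy] at this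
    have hterm : (u' - u) * (|d y| - |d x|) ≤ -((u' - u) * (K + 1)) := by
      have : |d y| - |d x| ≤ -(K + 1) := by linarith
      calc (u' - u) * (|d y| - |d x|) ≤ (u' - u) * (-(K + 1)) := by
            exact mul_le_mul_of_nonneg_left this hgap.le
        _ = -((u' - u) * (K + 1)) := by ring
    linarith [this, hterm, harith]
  -- Step 1: the set of admissible excess thresholds is nonempty
  have hSE : ∃ t, 0 ≤ t ∧ Summable (auxE lam d u t) := by
    by_contra hall
    push_neg at hall
    obtain ⟨y₀, hy₀⟩ := hu'
    set t₁ : ℝ := max (|d y₀| + K + 1) 0 with ht₁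
    have := hall t₁ (le_max_right _ _)
    have hne : ∃ x, auxE lam d u t₁ x ≠ 0 := by
      by_contra hz
      push_neg at hz
      refine this ?_
      have : auxE lam d u t₁ = fun _ => 0 := funext fun x => hz x
      rw [this]; exact summable_zero
    obtain ⟨x, hx⟩ := hne
    obtain ⟨hxl, hxb⟩ := auxE_support_mem hx
    refine hpair x y₀ hxl hy₀ ?_
    have : |d y₀| + K + 1 ≤ t₁ := le_max_left _ _
    linarith
  set SE : Set ℝ := {t | 0 ≤ t ∧ Summable (auxE lam d u t)} with hSEdef
  have hSEne : SE.Nonempty := hSE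
  have hSEbdd : BddBelow SE := ⟨0, fun t ht => ht.1⟩
  set tb : ℝ := sInf SE with htbdef
  have htb0 : 0 ≤ tb := le_csInf hSEne (fun t ht => ht.1)
  have hgt : ∀ s, tb < s → Summable (auxE lam d u s) := by
    intro s hs
    obtain ⟨t, htSE, hts⟩ := (csInf_lt_iff hSEbdd hSEne).1 hs
    exact auxE_summable_of_le lam d u hts.le htSE.2
  by_contra hfinal
  push_neg at hfinal
  have hcon : ∀ t, 0 ≤ t → Summable (auxE lam d u t) → ¬ Summable (auxD lam d u' t) := by
    intro t ht hE hD
    exact (hfinal t ht hE) hD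
  by_cases hD : Summable (auxD lam d u' tb)
  · -- case B1
    have hnE : ¬ Summable (auxE lam d u tb) := fun hE => hcon tb htb0 hE hD
    obtain ⟨T₀, hT₀⟩ := not_summable_exists_sum (auxE_nonneg lam d u tb) hnE (2*K+2)
    set T : Finset J := T₀.filter (fun x => auxE lam d u tb x ≠ 0) with hTdef
    have hTsum : 2*K+2 ≤ ∑ x ∈ T, (|d x| - tb) := by
      rw [hTdef]
      have h1 : ∑ x ∈ T₀.filter (fun x => auxE lam d u tb x ≠ 0), (|d x| - tb)
          = ∑ x ∈ T₀.filter (fun x => auxE lam d u tb x ≠ 0), auxE lam d u tb x := by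
        refine Finset.sum_congr rfl ?_
        intro x hx
        obtain ⟨hxl, hxb⟩ := auxE_support_mem (Finset.mem_filter.1 hx).2
        unfold auxE
        rw [if_pos hxl, max_eq_left (by linarith)]
      rw [h1, Finset.sum_filter_ne_zero]
      exact hT₀
    have hTmem : ∀ x ∈ T, |lam x| = u ∧ tb < |d x| := by
      intro x hx
      exact auxE_support_mem (Finset.mem_filter.1 hx).2
    -- supply of partners
    set U : J → Set J := fun x => Function.support (auxD lam d u' (tb + (|d x| - tb)/2))
      with hUdef
    have hUinf : ∀ x ∈ T, (U x).Infinite := by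
      intro x hx
      obtain ⟨hxl, hxb⟩ := hTmem x hx
      have hgt' : tb < tb + (|d x| - tb)/2 := by linarith
      have hE' : Summable (auxE lam d u (tb + (|d x| - tb)/2)) := hgt _ hgt'
      have hD' : ¬ Summable (auxD lam d u' (tb + (|d x| - tb)/2)) :=
        hcon _ (by linarith) hE'
      exact not_summable_support_infinite hD'
    obtain ⟨f, hfinj, hfmem⟩ := exists_injOn_mem T U hUinf
    have hfprop : ∀ x ∈ T, |lam (f x)| = u' ∧ |d (f x)| < tb + (|d x| - tb)/2 := by
      intro x hx
      exact auxD_support_mem (hfmem x hx)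
    have hfT : ∀ x ∈ T, f x ∉ T := by
      intro x hx hfxT
      have h1 := (hTmem _ hfxT).1
      rw [(hfprop x hx).1] at h1
      linarith
    have hen := pairs_energy lam d hC T f hfinj hfT
    have hbound : ∑ x ∈ T, (|lam (f x)| - |lam x|) * (|d (f x)| - |d x|)
        ≤ -((u' - u) * (K + 1)) := by
      have h1 : ∀ x ∈ T, (|lam (f x)| - |lam x|) * (|d (f x)| - |d x|)
          ≤ -((u' - u)/2 * (|d x| - tb)) := by
        intro x hx
        obtain ⟨hxl, hxb⟩ := hTmem x hx
        obtain ⟨hfl, hfb⟩ := hfprop x hx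
        rw [hfl, hxl]
        have hlt2 : |d (f x)| - |d x| ≤ -((|d x| - tb)/2) := by
          linarith
        calc (u' - u) * (|d (f x)| - |d x|) ≤ (u' - u) * (-((|d x| - tb)/2)) :=
              mul_le_mul_of_nonneg_left hlt2 hgap.le
          _ = -((u' - u)/2 * (|d x| - tb)) := by ring
      calc ∑ x ∈ T, (|lam (f x)| - |lam x|) * (|d (f x)| - |d x|)
          ≤ ∑ x ∈ T, -((u' - u)/2 * (|d x| - tb)) := Finset.sum_le_sum h1
        _ = -((u' - u)/2 * ∑ x ∈ T, (|d x| - tb)) := by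
            rw [Finset.sum_neg_distrib, Finset.mul_sum]
        _ ≤ -((u' - u)/2 * (2*K+2)) := by
            have : (u' - u)/2 * (2*K+2) ≤ (u' - u)/2 * ∑ x ∈ T, (|d x| - tb) :=
              mul_le_mul_of_nonneg_left hTsum (by linarith)
            linarith
        _ = -((u' - u) * (K + 1)) := by ring
    linarith
  · -- case B2
    have htbpos : 0 < tb := by
      rcases eq_or_lt_of_le htb0 with h | h
      · exact absurd (h ▸ auxD_zero_summable lam d u') hD
      · exact h
    obtain ⟨T₀, hT₀⟩ := not_summable_exists_sum (auxD_nonneg lam d u' tb) hD (2*K+2)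
    set T : Finset J := T₀.filter (fun y => auxD lam d u' tb y ≠ 0) with hTdef
    have hTsum : 2*K+2 ≤ ∑ y ∈ T, (tb - |d y|) := by
      rw [hTdef]
      have h1 : ∑ y ∈ T₀.filter (fun y => auxD lam d u' tb y ≠ 0), (tb - |d y|)
          = ∑ y ∈ T₀.filter (fun y => auxD lam d u' tb y ≠ 0), auxD lam d u' tb y := by
        refine Finset.sum_congr rfl ?_
        intro y hy
        obtain ⟨hyl, hyb⟩ := auxD_support_mem (Finset.mem_filter.1 hy).2
        unfold auxD
        rw [if_pos hyl, max_eq_left (by linarith)]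
      rw [h1, Finset.sum_filter_ne_zero]
      exact hT₀
    have hTmem : ∀ y ∈ T, |lam y| = u' ∧ |d y| < tb := by
      intro y hy
      exact auxD_support_mem (Finset.mem_filter.1 hy).2
    set U : J → Set J := fun y => Function.support (auxE lam d u ((tb + |d y|)/2)) with hUdef
    have hUinf : ∀ y ∈ T, (U y).Infinite := by
      intro y hy
      obtain ⟨hyl, hyb⟩ := hTmem y hy
      have hby0 : 0 ≤ |d y| := abs_nonneg _
      have hslt : (tb + |d y|)/2 < tb := by linarith
      have hnE : ¬ Summable (auxE lam d u ((tb + |d y|)/2)) := by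
        intro hE
        have hmem : (tb + |d y|)/2 ∈ SE := ⟨by linarith, hE⟩
        have := csInf_le hSEbdd hmem
        rw [← htbdef] at this
        linarith
      exact not_summable_support_infinite hnE
    obtain ⟨f, hfinj, hfmem⟩ := exists_injOn_mem T U hUinf
    have hfprop : ∀ y ∈ T, |lam (f y)| = u ∧ (tb + |d y|)/2 < |d (f y)| := by
      intro y hy
      exact auxE_support_mem (hfmem y hy)
    have hfT : ∀ y ∈ T, f y ∉ T := by
      intro y hy hfyT
      have h1 := (hTmem _ hfyT).1
      rw [(hfprop y hy).1] at h1
      linarith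
    have hen := pairs_energy lam d hC T f hfinj hfT
    have hbound : ∑ y ∈ T, (|lam (f y)| - |lam y|) * (|d (f y)| - |d y|)
        ≤ -((u' - u) * (K + 1)) := by
      have h1 : ∀ y ∈ T, (|lam (f y)| - |lam y|) * (|d (f y)| - |d y|)
          ≤ -((u' - u)/2 * (tb - |d y|)) := by
        intro y hy
        obtain ⟨hyl, hyb⟩ := hTmem y hy
        obtain ⟨hfl, hfb⟩ := hfprop y hy
        rw [hfl, hyl]
        have hlt2 : (tb - |d y|)/2 ≤ |d (f y)| - |d y| := by
          linarith
        have := mul_le_mul_of_nonneg_left hlt2 hgap.le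
        calc (u - u') * (|d (f y)| - |d y|) = -((u' - u) * (|d (f y)| - |d y|)) := by ring
          _ ≤ -((u' - u) * ((tb - |d y|)/2)) := by linarith
          _ = -((u' - u)/2 * (tb - |d y|)) := by ring
      calc ∑ y ∈ T, (|lam (f y)| - |lam y|) * (|d (f y)| - |d y|)
          ≤ ∑ y ∈ T, -((u' - u)/2 * (tb - |d y|)) := Finset.sum_le_sum h1
        _ = -((u' - u)/2 * ∑ y ∈ T, (tb - |d y|)) := by
            rw [Finset.sum_neg_distrib, Finset.mul_sum]
        _ ≤ -((u' - u)/2 * (2*K+2)) := by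
            have : (u' - u)/2 * (2*K+2) ≤ (u' - u)/2 * ∑ y ∈ T, (tb - |d y|) :=
              mul_le_mul_of_nonneg_left hTsum (by linarith)
            linarith
        _ = -((u' - u) * (K + 1)) := by ring
    linarith

end TwoLevel

section Backward

variable {J : Type*}

lemma pecB_of_decomposition [Nonempty J] (lam d : J → ℝ) {L : ℝ} (hL : ∀ j, |lam j| ≤ L)
    (d₀ d₁ : J → ℝ) (hdd : ∀ j, d j = d₀ j + d₁ j) (h1 : Summable fun j => |d₁ j|)
    (h2 : ∀ j, lam j * d₀ j ≤ 0) (h3 : ∀ i j, |lam i| < |lam j| → |d₀ i| ≤ |d₀ j|) :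
    PECB lam d := by
  classical
  have hL0 : 0 ≤ L := le_trans (abs_nonneg _) (hL (Classical.arbitrary J))
  set T : ℝ := ∑' j, |d₁ j| with hTdef
  have hT0 : 0 ≤ T := tsum_nonneg (fun j => abs_nonneg _)
  refine ⟨-(2 * L * T), ?_⟩
  intro σ w hσ hw
  set S : Finset J := hw.toFinset ∪ hσ.2.toFinset with hSdef
  have hoffσ : ∀ j, j ∉ S → σ j = 1 := by
    intro j hj
    rw [hSdef, Finset.mem_union] at hj
    push_neg at hj
    have := hj.2
    rw [Set.Finite.mem_toFinset] at this
    simpa using this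
  have hoffw : ∀ j, j ∉ S → w j = j := by
    intro j hj
    rw [hSdef, Finset.mem_union] at hj
    push_neg at hj
    have := hj.1
    exact not_not.1 fun h => this ((Set.Finite.mem_toFinset hw).2 h)
  have hsupp : {x | w x ≠ x} ⊆ ↑S := by
    intro x hx
    simp only [Set.mem_setOf_eq] at hx
    by_contra hxS
    exact hx (hoffw x hxS)
  rw [energyB_eq_sum lam d σ w S hoffσ hoffw]
  have hσ1 : ∀ j, |σ j| = 1 := by
    intro j
    rcases hσ.1 j with h | h <;> rw [h] <;> simp
  have hterm : ∀ j ∈ S, lam j * (σ j * d (w j) - d j)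
      = σ j * (lam j * d₀ (w j)) + σ j * (lam j * d₁ (w j)) - lam j * d₀ j - lam j * d₁ j := by
    intro j _
    rw [hdd (w j), hdd j]
    ring
  rw [Finset.sum_congr rfl hterm]
  have hsplit : ∑ j ∈ S, (σ j * (lam j * d₀ (w j)) + σ j * (lam j * d₁ (w j))
        - lam j * d₀ j - lam j * d₁ j)
      = ∑ j ∈ S, σ j * (lam j * d₀ (w j)) + ∑ j ∈ S, σ j * (lam j * d₁ (w j))
        - ∑ j ∈ S, lam j * d₀ j - ∑ j ∈ S, lam j * d₁ j := by
    rw [← Finset.sum_add_distrib, ← Finset.sum_sub_distrib, ← Finset.sum_sub_distrib]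
  rw [hsplit]
  -- the d₀-parts
  have hA : ∑ j ∈ S, σ j * (lam j * d₀ (w j)) ≥ - ∑ j ∈ S, |d₀ (w j)| * |lam j| := by
    rw [← Finset.sum_neg_distrib]
    refine Finset.sum_le_sum ?_
    intro j _
    have : -(|lam j * d₀ (w j)|) ≤ σ j * (lam j * d₀ (w j)) := by
      rcases hσ.1 j with h | h <;> rw [h]
      · simpa using neg_abs_le (lam j * d₀ (w j))
      · simpa using le_abs_self (lam j * d₀ (w j))
    calc -(|d₀ (w j)| * |lam j|) = -(|lam j * d₀ (w j)|) := by
          rw [abs_mul]; ring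
      _ ≤ σ j * (lam j * d₀ (w j)) := this
  have hre : ∑ j ∈ S, |d₀ (w j)| * |lam j| ≤ ∑ j ∈ S, |d₀ j| * |lam j| := by
    have hMono : Monovary (fun j => |d₀ j|) (fun j => |lam j|) := fun i j h => h3 _ _ h
    have := (hMono.monovaryOn (↑S : Set J)).sum_comp_perm_smul_le_sum_smul hsupp
    simpa [smul_eq_mul] using this
  have hB : ∑ j ∈ S, lam j * d₀ j = - ∑ j ∈ S, |d₀ j| * |lam j| := by
    rw [← Finset.sum_neg_distrib]
    refine Finset.sum_congr rfl ?_
    intro j _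
    rw [mul_comm (|d₀ j|) (|lam j|), ← abs_mul, abs_of_nonpos (h2 j), neg_neg]
  -- the d₁-parts
  have hsum1 : ∑ j ∈ S, |d₁ j| ≤ T := Summable.sum_le_tsum S (fun i _ => abs_nonneg _) h1
  have hsum1w : ∑ j ∈ S, |d₁ (w j)| = ∑ j ∈ S, |d₁ j| := w.sum_comp S (fun j => |d₁ j|) hsupp
  have hC : ∑ j ∈ S, σ j * (lam j * d₁ (w j)) ≥ -(L * T) := by
    have h1' : ∀ j ∈ S, -(L * |d₁ (w j)|) ≤ σ j * (lam j * d₁ (w j)) := by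
      intro j _
      have ha : |lam j * d₁ (w j)| ≤ L * |d₁ (w j)| := by
        rw [abs_mul]
        exact mul_le_mul_of_nonneg_right (hL j) (abs_nonneg _)
      have hb : -(|lam j * d₁ (w j)|) ≤ σ j * (lam j * d₁ (w j)) := by
        rcases hσ.1 j with h | h <;> rw [h]
        · simpa using neg_abs_le (lam j * d₁ (w j))
        · simpa using le_abs_self (lam j * d₁ (w j))
      linarith
    calc -(L * T) ≤ -(L * ∑ j ∈ S, |d₁ (w j)|) := by
          rw [hsum1w]
          have := mul_le_mul_of_nonneg_left hsum1 hL0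
          linarith
      _ = ∑ j ∈ S, -(L * |d₁ (w j)|) := by rw [Finset.sum_neg_distrib, Finset.mul_sum]
      _ ≤ ∑ j ∈ S, σ j * (lam j * d₁ (w j)) := Finset.sum_le_sum h1'
  have hD : ∑ j ∈ S, lam j * d₁ j ≤ L * T := by
    have h1' : ∀ j ∈ S, lam j * d₁ j ≤ L * |d₁ j| := by
      intro j _
      calc lam j * d₁ j ≤ |lam j * d₁ j| := le_abs_self _
        _ = |lam j| * |d₁ j| := abs_mul _ _
        _ ≤ L * |d₁ j| := mul_le_mul_of_nonneg_right (hL j) (abs_nonneg _)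
    calc ∑ j ∈ S, lam j * d₁ j ≤ ∑ j ∈ S, L * |d₁ j| := Finset.sum_le_sum h1'
      _ = L * ∑ j ∈ S, |d₁ j| := by rw [Finset.mul_sum]
      _ ≤ L * T := mul_le_mul_of_nonneg_left hsum1 hL0
  linarith

end Backward

section Forward
variable {J : Type*}

lemma clamp_abs_le {α β : ℝ} (x : ℝ) (h : α ≤ β) :
    |x - max α (min x β)| ≤ max (α - x) 0 + max (x - β) 0 := by
  rcases le_total x α with h1 | h1
  · rw [min_eq_left (h1.trans h), max_eq_left h1, abs_of_nonpos (by linarith)]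
    have e1 : max (α - x) 0 = α - x := max_eq_left (by linarith)
    have e2 : max (x - β) 0 = 0 := max_eq_right (by linarith)
    rw [e1, e2]; linarith
  · rcases le_total x β with h2 | h2
    · rw [min_eq_left h2, max_eq_right h1, sub_self, abs_zero]
      have e1 := le_max_right (α - x) 0
      have e2 := le_max_right (x - β) 0
      linarith
    · rw [min_eq_right h2, max_eq_right h, abs_of_nonneg (by linarith)]
      have e1 : max (α - x) 0 = 0 := max_eq_right (by linarith)
      have e2 : max (x - β) 0 = x - β := max_eq_left (by linarith)
      rw [e1, e2]; linarith

lemma clamp_abs_le' {α : ℝ} (x : ℝ) : |x - max α x| ≤ max (α - x) 0 := by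
  rcases le_total x α with h1 | h1
  · rw [max_eq_left h1, abs_of_nonpos (by linarith)]
    have e1 : max (α - x) 0 = α - x := max_eq_left (by linarith)
    rw [e1]
    linarith
  · rw [max_eq_right h1, sub_self, abs_zero]

    exact le_max_right _ _

/-- The forward direction: the decomposition from the positive energy condition. -/
lemma decomposition_of_pecB (lam d : J → ℝ) (hfin : (Set.range lam).Finite) {C : ℝ}
    (hC : ∀ (σ : J → ℝ) (w : Equiv.Perm J), IsSign σ → IsFinPerm w → C ≤ energyB lam d σ w) :
    ∃ d₀ d₁ : J → ℝ, (∀ j, d j = d₀ j + d₁ j) ∧ (Summable fun j => |d₁ j|) ∧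
      (∀ j, lam j * d₀ j ≤ 0) ∧
      ∀ i j : J, |lam i| < |lam j| → |d₀ i| ≤ |d₀ j| := by
  classical
  set Wset : Set ℝ := Set.range (fun j => |lam j|) with hWsetdef
  have hwj : ∀ j : J, |lam j| ∈ Wset := fun j => ⟨j, rfl⟩
  have hWfin : Wset.Finite := by
    refine (hfin.image abs).subset ?_
    rintro y ⟨j, rfl⟩
    exact ⟨lam j, ⟨j, rfl⟩, rfl⟩
  have hτex : ∀ u u' : ℝ, ∃ t, 0 ≤ t ∧ ((u ∈ Wset ∧ u' ∈ Wset ∧ u < u') →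
      (Summable (auxE lam d u t) ∧ Summable (auxD lam d u' t))) := by
    intro u u'
    by_cases hcond : u ∈ Wset ∧ u' ∈ Wset ∧ u < u'
    · obtain ⟨t, ht0, ht1, ht2⟩ := two_level lam d hC (u := u) (u' := u')
        (by obtain ⟨y, hy⟩ := hcond.2.1; exact ⟨y, hy⟩) hcond.2.2
      exact ⟨t, ht0, fun _ => ⟨ht1, ht2⟩⟩
    · exact ⟨0, le_rfl, fun h => absurd h hcond⟩
  choose τ hτ0 hτs using hτex
  set m : ℝ → ℝ → ℝ := fun u v => sInf (τ u '' {u' | u' ∈ Wset ∧ v ≤ u'}) with hmdef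
  set A : ℝ → ℝ := fun v => sSup (insert 0 ((fun u => m u v) '' {u | u ∈ Wset ∧ u < v}))
    with hAdef
  set B : ℝ → ℝ := fun v => sInf (A '' {u' | u' ∈ Wset ∧ v < u'}) with hBdef
  have hfin1 : ∀ v : ℝ, ({u' | u' ∈ Wset ∧ v ≤ u'}).Finite :=
    fun v => hWfin.subset (fun x hx => hx.1)
  have hfin2 : ∀ v : ℝ, ({u | u ∈ Wset ∧ u < v}).Finite :=
    fun v => hWfin.subset (fun x hx => hx.1)
  have hfin3 : ∀ v : ℝ, ({u' | u' ∈ Wset ∧ v < u'}).Finite :=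
    fun v => hWfin.subset (fun x hx => hx.1)
  have hA0 : ∀ v, 0 ≤ A v := by
    intro v
    rw [hAdef]
    exact le_csSup (Set.Finite.bddAbove (((hfin2 v).image _).insert 0)) (Set.mem_insert 0 _)
  have hmle : ∀ u v, u ∈ Wset → v ∈ Wset → u < v → m u v ≤ τ u v := by
    intro u v hu hv huv
    rw [hmdef]
    exact csInf_le (Set.Finite.bddBelow ((hfin1 v).image _)) ⟨v, ⟨hv, le_rfl⟩, rfl⟩
  have hmvmono : ∀ u v v', v' ∈ Wset → v ≤ v' → m u v ≤ m u v' := by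
    intro u v v' hv' hvv'
    rw [hmdef]
    refine csInf_le_csInf (Set.Finite.bddBelow ((hfin1 v).image _))
      ⟨τ u v', v', ⟨hv', le_rfl⟩, rfl⟩ ?_
    refine Set.image_mono ?_
    intro x hx
    exact ⟨hx.1, hvv'.trans hx.2⟩
  have hAmono : ∀ v v', v' ∈ Wset → v ≤ v' → A v ≤ A v' := by
    intro v v' hv' hvv'
    conv_lhs => rw [hAdef]
    refine csSup_le ⟨0, Set.mem_insert 0 _⟩ ?_
    rintro x (rfl | ⟨u, ⟨huW, hult⟩, rfl⟩)
    · exact hA0 v'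
    · refine (hmvmono u v v' hv' hvv').trans ?_
      rw [hAdef]
      exact le_csSup (Set.Finite.bddAbove (((hfin2 v').image _).insert 0))
        (Set.mem_insert_of_mem _ ⟨u, ⟨huW, lt_of_lt_of_le hult hvv'⟩, rfl⟩)
  have hBleA : ∀ v u', u' ∈ Wset → v < u' → B v ≤ A u' := by
    intro v u' hu' hlt
    rw [hBdef]
    exact csInf_le (Set.Finite.bddBelow ((hfin3 v).image A)) ⟨u', ⟨hu', hlt⟩, rfl⟩
  have hAleB : ∀ v, v ∈ Wset → ({u' | u' ∈ Wset ∧ v < u'}).Nonempty → A v ≤ B v := by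
    intro v hv hne
    rw [hBdef]
    refine le_csInf (hne.image A) ?_
    rintro x ⟨u', ⟨hu'W, hlt⟩, rfl⟩
    exact hAmono v u' hu'W hlt.le
  set b₀ : J → ℝ := fun j => if ({u' | u' ∈ Wset ∧ |lam j| < u'}).Nonempty then
      max (A (|lam j|)) (min (|d j|) (B (|lam j|))) else max (A (|lam j|)) (|d j|) with hb₀def
  have hb₀0 : ∀ j, 0 ≤ b₀ j := by
    intro j
    simp only [hb₀def]
    split_ifs <;> exact (hA0 _).trans (le_max_left _ _)
  have hb₀mono : ∀ x y, |lam x| < |lam y| → b₀ x ≤ b₀ y := by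
    intro x y hxy
    have hne : ({u' | u' ∈ Wset ∧ |lam x| < u'}).Nonempty := ⟨|lam y|, hwj y, hxy⟩
    have hy : A (|lam y|) ≤ b₀ y := by
      simp only [hb₀def]
      split_ifs <;> exact le_max_left _ _
    simp only [hb₀def, if_pos hne]
    refine le_trans (max_le ?_ ?_) hy
    · exact hAmono _ _ (hwj y) hxy.le
    · exact le_trans (min_le_right _ _) (hBleA _ _ (hwj y) hxy)
  set WF : Finset ℝ := hWfin.toFinset with hWFdef
  set hfn : ℝ → J → ℝ := fun u j => auxD lam d u (A u) j +
      (if ({u' | u' ∈ Wset ∧ u < u'}).Nonempty then auxE lam d u (B u) j else 0) with hhudef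
  have hhu_nonneg : ∀ u j, 0 ≤ hfn u j := by
    intro u j
    simp only [hhudef]
    refine add_nonneg (auxD_nonneg _ _ _ _ _) ?_
    split_ifs
    · exact auxE_nonneg _ _ _ _ _
    · exact le_rfl
  have hhu_summable : ∀ u ∈ WF, Summable (hfn u) := by
    intro u huWF
    have huW : u ∈ Wset := hWfin.mem_toFinset.1 huWF
    simp only [hhudef]
    refine Summable.add ?_ ?_
    · have hmem : A u ∈ insert 0 ((fun u₀ => m u₀ u) '' {u₀ | u₀ ∈ Wset ∧ u₀ < u}) := by
        rw [hAdef]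
        exact Set.Nonempty.csSup_mem ⟨0, Set.mem_insert 0 _⟩ (((hfin2 u).image _).insert 0)
      rcases hmem with h0 | ⟨u₀, ⟨hu₀W, hu₀lt⟩, hmu⟩
      · rw [h0]
        exact auxD_zero_summable lam d u
      · have hle : A u ≤ τ u₀ u := by
          rw [← hmu]
          exact hmle u₀ u hu₀W huW hu₀lt
        exact auxD_summable_of_le lam d u hle ((hτs u₀ u ⟨hu₀W, huW, hu₀lt⟩).2)
    · by_cases hcond : ({u' | u' ∈ Wset ∧ u < u'}).Nonempty
      · simp only [if_pos hcond]
        have hmem : B u ∈ A '' {u' | u' ∈ Wset ∧ u < u'} := by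
          rw [hBdef]
          exact Set.Nonempty.csInf_mem (hcond.image A) ((hfin3 u).image A)
        obtain ⟨u', ⟨hu'W, hu'lt⟩, hBu⟩ := hmem
        have hge1 : m u u' ≤ A u' := by
          rw [hAdef]
          exact le_csSup (Set.Finite.bddAbove (((hfin2 u').image _).insert 0))
            (Set.mem_insert_of_mem _ ⟨u, ⟨huW, hu'lt⟩, rfl⟩)
        have hmem2 : m u u' ∈ τ u '' {u'' | u'' ∈ Wset ∧ u' ≤ u''} := by
          rw [hmdef]
          exact Set.Nonempty.csInf_mem ⟨τ u u', u', ⟨hu'W, le_rfl⟩, rfl⟩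
            ((hfin1 u').image _)
        obtain ⟨u'', ⟨hu''W, hu''ge⟩, hmu2⟩ := hmem2
        have hsum : Summable (auxE lam d u (τ u u'')) :=
          (hτs u u'' ⟨huW, hu''W, lt_of_lt_of_le hu'lt hu''ge⟩).1
        refine auxE_summable_of_le lam d u ?_ hsum
        rw [← hBu]
        rw [← hmu2] at hge1
        exact hge1
      · simp only [if_neg hcond]
        exact summable_zero
  have hdom : ∀ j, |(|d j| - b₀ j)| ≤ ∑ u ∈ WF, hfn u j := by
    intro j
    have hmemWF : |lam j| ∈ WF := hWfin.mem_toFinset.2 (hwj j)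
    have hone : |(|d j| - b₀ j)| ≤ hfn (|lam j|) j := by
      simp only [hhudef, hb₀def]
      have hD : auxD lam d (|lam j|) (A (|lam j|)) j = max (A (|lam j|) - |d j|) 0 := by
        unfold auxD
        rw [if_pos rfl]
      by_cases hcond : ({u' | u' ∈ Wset ∧ |lam j| < u'}).Nonempty
      · have hE : auxE lam d (|lam j|) (B (|lam j|)) j = max (|d j| - B (|lam j|)) 0 := by
          unfold auxE
          rw [if_pos rfl]
        simp only [if_pos hcond]
        rw [hD, hE]
        exact clamp_abs_le (|d j|) (hAleB _ (hwj j) hcond)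
      · simp only [if_neg hcond]
        rw [hD]
        have := clamp_abs_le' (α := A (|lam j|)) (|d j|)
        linarith
    refine hone.trans ?_
    exact Finset.single_le_sum (fun u _ => hhu_nonneg u j) hmemWF
  have hP3 : Summable (fun j => |(|d j| - b₀ j)|) :=
    Summable.of_nonneg_of_le (fun j => abs_nonneg _) hdom (summable_sum hhu_summable)
  have hp : Summable (fun j => max (lam j * d j) 0) := pos_part_summable lam d hC
  set Wpos : Set ℝ := {v | v ∈ Wset ∧ 0 < v} with hWposdef
  set ε : ℝ := if Wpos.Nonempty then sInf Wpos else 1 with hεdef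
  have hε0 : 0 < ε := by
    rw [hεdef]
    split_ifs with h
    · exact (Set.Nonempty.csInf_mem h (hWfin.subset fun x hx => hx.1)).2
    · exact one_pos
  have hεle : ∀ j, lam j ≠ 0 → ε ≤ |lam j| := by
    intro j hj
    have hmem : |lam j| ∈ Wpos := ⟨hwj j, abs_pos.2 hj⟩
    rw [hεdef, if_pos ⟨_, hmem⟩]
    exact csInf_le (Set.Finite.bddBelow (hWfin.subset fun x hx => hx.1)) hmem
  have hnum : ∀ z l : ℝ, ε ≤ l → 0 ≤ z → 2 * z ≤ (2/ε) * (l * z) := by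
    intro z l hl hz
    have h1 : ε * z ≤ l * z := mul_le_mul_of_nonneg_right hl hz
    have h2 : (2:ℝ) * z = (2/ε) * (ε * z) := by
      field_simp
    rw [h2]
    exact mul_le_mul_of_nonneg_left h1 (by positivity)
  set sg : J → ℝ := fun j => if 0 < lam j then (-1:ℝ) else if lam j < 0 then 1 else
      if d j < 0 then -1 else 1 with hsgdef
  have hsg1 : ∀ j, |sg j| = 1 := by
    intro j
    simp only [hsgdef]
    split_ifs <;> simp
  set d₀ : J → ℝ := fun j => sg j * b₀ j with hd₀def
  have habs0 : ∀ j, |d₀ j| = b₀ j := by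
    intro j
    simp only [hd₀def]
    rw [abs_mul, hsg1, one_mul, abs_of_nonneg (hb₀0 j)]
  refine ⟨d₀, fun j => d j - d₀ j, fun j => by ring, ?_, ?_, ?_⟩
  · -- summability of the ℓ¹-part
    have hq : ∀ j, |d j - d₀ j| ≤ (2/ε) * max (lam j * d j) 0 + |(|d j| - b₀ j)| := by
      intro j
      have htri : |d j - d₀ j| ≤ |(d j - sg j * |d j|)| + |sg j * |d j| - d₀ j| :=
        abs_sub_le _ _ _
      have hsecond : |sg j * |d j| - d₀ j| = |(|d j| - b₀ j)| := by
        simp only [hd₀def]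
        rw [← mul_sub, abs_mul, hsg1, one_mul]
      have hrhs0 : 0 ≤ (2/ε) * max (lam j * d j) 0 :=
        mul_nonneg (by positivity) (le_max_right _ _)
      have hfirst : |(d j - sg j * |d j|)| ≤ (2/ε) * max (lam j * d j) 0 := by
        rcases lt_trichotomy (lam j) 0 with h | h | h
        · have hsgj : sg j = 1 := by
            simp only [hsgdef]
            rw [if_neg (by linarith : ¬ 0 < lam j), if_pos h]
          rcases le_or_gt 0 (d j) with hd | hd
          · have he : d j - sg j * |d j| = 0 := by
              rw [hsgj, abs_of_nonneg hd]; ring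
            rw [he, abs_zero]
            exact hrhs0
          · have h1 : |(d j - sg j * |d j|)| = 2 * |d j| := by
              rw [hsgj, abs_of_neg hd]
              have he : d j - 1 * -d j = 2 * d j := by ring
              rw [he, abs_of_nonpos (by linarith : 2 * d j ≤ 0)]
              ring
            rw [h1]
            have hplam : max (lam j * d j) 0 = |lam j| * |d j| := by
              rw [max_eq_left (by nlinarith), abs_of_neg h, abs_of_neg hd]
              ring
            rw [hplam]
            exact hnum _ _ (hεle j (by linarith)) (abs_nonneg _)
        · have hsgj : sg j = if d j < 0 then (-1:ℝ) else 1 := by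
            simp only [hsgdef]
            rw [if_neg (by rw [h]; exact lt_irrefl 0), if_neg (by rw [h]; exact lt_irrefl 0)]
          rcases lt_or_ge (d j) 0 with hd | hd
          · have he : d j - sg j * |d j| = 0 := by
              rw [hsgj, if_pos hd, abs_of_neg hd]; ring
            rw [he, abs_zero]
            exact hrhs0
          · have he : d j - sg j * |d j| = 0 := by
              rw [hsgj, if_neg (not_lt.2 hd), abs_of_nonneg hd]; ring
            rw [he, abs_zero]
            exact hrhs0
        · have hsgj : sg j = -1 := by
            simp only [hsgdef]
            rw [if_pos h]
          rcases le_or_gt (d j) 0 with hd | hd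
          · have he : d j - sg j * |d j| = 0 := by
              rw [hsgj, abs_of_nonpos hd]; ring
            rw [he, abs_zero]
            exact hrhs0
          · have h1 : |(d j - sg j * |d j|)| = 2 * |d j| := by
              rw [hsgj, abs_of_pos hd]
              have he : d j - -1 * d j = 2 * d j := by ring
              rw [he, abs_of_pos (by linarith : (0:ℝ) < 2 * d j)]
            rw [h1]
            have hplam : max (lam j * d j) 0 = |lam j| * |d j| := by
              rw [max_eq_left (by nlinarith), abs_of_pos h, abs_of_pos hd]
            rw [hplam]
            exact hnum _ _ (hεle j (by linarith)) (abs_nonneg _)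
      calc |d j - d₀ j| ≤ |(d j - sg j * |d j|)| + |sg j * |d j| - d₀ j| := htri
        _ ≤ (2/ε) * max (lam j * d j) 0 + |(|d j| - b₀ j)| := by
            rw [hsecond]
            exact add_le_add_left hfirst _
    refine Summable.of_nonneg_of_le (fun j => abs_nonneg _) hq ?_
    exact (hp.mul_left (2/ε)).add hP3
  · -- sign condition
    intro j
    simp only [hd₀def, hsgdef]
    have hb := hb₀0 j
    rcases lt_trichotomy (lam j) 0 with h | h | h
    · rw [if_neg (by linarith : ¬ 0 < lam j), if_pos h]
      nlinarith
    · rw [h]; simp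
    · rw [if_pos h]
      nlinarith
  · -- monovariance
    intro i j hij
    rw [habs0, habs0]
    exact hb₀mono i j hij

end Forward

theorem pecB_characterisation (J : Type*) [Infinite J] (lam d : J → ℝ)
    (hfin : (Set.range lam).Finite) :
    PECB lam d ↔
      ∃ d₀ d₁ : J → ℝ, (∀ j, d j = d₀ j + d₁ j) ∧ (Summable fun j => |d₁ j|) ∧
        (∀ j, lam j * d₀ j ≤ 0) ∧
        ∀ i j : J, |lam i| < |lam j| → |d₀ i| ≤ |d₀ j| := by
  constructor
  · rintro ⟨C, hC⟩
    exact decomposition_of_pecB lam d hfin hC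
  · rintro ⟨d₀, d₁, h1, h2, h3, h4⟩
    obtain ⟨L, hL⟩ := (hfin.image abs).bddAbove
    exact pecB_of_decomposition lam d
      (fun j => hL (Set.mem_image_of_mem abs ⟨j, rfl⟩)) d₀ d₁ h1 h2 h3 h4
end

section
/- Let $J$ be an infinite set and $\lambda=(\lambda_j),\chi=(d_j)\in\mathbb{R}^J$ satisfy the positive energy condition for $W(A_J)$. Let $m<n$ be reals and $r\in\mathbb{R}$. If $J_m^{<r}=\{j:\lambda_j=m,\ d_j<r\}$ and $J_n^{>r}=\{j:\lambda_j=n,\ d_j>r\}$ are both infinite, then $\sum_{j\in J_m^{<r}}(r-d_j)<\infty$ and $\sum_{j\in J_n^{>r}}(d_j-r)<\infty$. -/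
open scoped BigOperators

theorem pecA_both_infinite_summable (J : Type*) [Infinite J] (lam d : J → ℝ)
    (hpec : PECA lam d) (m n r : ℝ) (hmn : m < n)
    (h1 : {j | lam j = m ∧ d j < r}.Infinite)
    (h2 : {j | lam j = n ∧ r < d j}.Infinite) :
    (Summable fun j : {j : J // lam j = m ∧ d j < r} => r - d j.1) ∧
    (Summable fun j : {j : J // lam j = n ∧ r < d j} => d j.1 - r) := by
  classical
  obtain ⟨C, hC⟩ := hpec
  have hnm : (0:ℝ) < n - m := sub_pos.mpr hmn
  have key : ∀ (F G : Finset J), (↑F ⊆ {j | lam j = m ∧ d j < r}) →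
      (↑G ⊆ {j | lam j = n ∧ r < d j}) → F.card = G.card →
      ∑ j ∈ F, (r - d j) + ∑ j ∈ G, (d j - r) ≤ -C / (n - m) := by
    intro F G hF hG hcard
    have hdisj : Disjoint F G := by
      rw [Finset.disjoint_left]
      intro j hjF hjG
      have h1 := (hF hjF).2
      have h2 := (hG hjG).2
      linarith
    have e : F ≃ G := Finset.equivOfCardEq hcard
    set f : J → J := fun j =>
      if h : j ∈ F then (e ⟨j, h⟩ : J)
      else if h : j ∈ G then (e.symm ⟨j, h⟩ : J) else j with hfdef
    have hmemG : ∀ x : (F : Set J), (e x : J) ∈ G := fun x => (e x).2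
    have hmemF : ∀ y : (G : Set J), (e.symm y : J) ∈ F := fun y => (e.symm y).2
    have hfF : ∀ j (h : j ∈ F), f j = (e ⟨j, h⟩ : J) := by
      intro j h; simp [hfdef, h]
    have hfG : ∀ j (h : j ∈ G), f j = (e.symm ⟨j, h⟩ : J) := by
      intro j h
      have hnF : j ∉ F := fun hjF => Finset.disjoint_left.mp hdisj hjF h
      simp [hfdef, hnF, h]
    have hinv : Function.Involutive f := by
      intro j
      by_cases hj : j ∈ F
      · rw [hfF j hj]
        have hG' : (e ⟨j, hj⟩ : J) ∈ G := hmemG _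
        rw [hfG _ hG']
        have : (⟨(e ⟨j, hj⟩ : J), hG'⟩ : {x // x ∈ G}) = e ⟨j, hj⟩ := rfl
        rw [this, Equiv.symm_apply_apply]
      · by_cases hj' : j ∈ G
        · rw [hfG j hj']
          have hF' : (e.symm ⟨j, hj'⟩ : J) ∈ F := hmemF _
          rw [hfF _ hF']
          have : (⟨(e.symm ⟨j, hj'⟩ : J), hF'⟩ : {x // x ∈ F}) = e.symm ⟨j, hj'⟩ := rfl
          rw [this, Equiv.apply_symm_apply]
        · simp [hfdef, hj, hj']
    set w : Equiv.Perm J := Function.Involutive.toPerm f hinv with hw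
    have hwapp : ∀ j, w j = f j := fun j => rfl
    have hfix : ∀ j, j ∉ F → j ∉ G → f j = j := by
      intro j h1 h2; simp [hfdef, h1, h2]
    have hfin : IsFinPerm w := by
      apply Set.Finite.subset ((F ∪ G).finite_toSet)
      intro j hj
      simp only [Set.mem_setOf_eq, hwapp] at hj
      by_contra hc
      simp only [Finset.coe_union, Set.mem_union, Finset.mem_coe, not_or] at hc
      exact hj (hfix j hc.1 hc.2)
    have henergy : energyA lam d w = ∑ j ∈ F ∪ G, lam j * (d (w j) - d j) := by
      apply finsum_eq_finset_sum_of_support_subset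
      intro j hj
      simp only [Function.mem_support, hwapp] at hj
      by_contra hc
      simp only [Finset.coe_union, Set.mem_union, Finset.mem_coe, not_or] at hc
      rw [hfix j hc.1 hc.2] at hj
      simp at hj
    have hsumF : ∑ j ∈ F, lam j * (d (w j) - d j)
        = ∑ i : F, m * (d (e i) - d i.1) := by
      rw [← Finset.sum_attach F (fun j => lam j * (d (w j) - d j)), Finset.univ_eq_attach]
      apply Finset.sum_congr rfl
      intro x _
      rw [hwapp, hfF x.1 x.2, (hF x.2).1]
    have hsumG : ∑ j ∈ G, lam j * (d (w j) - d j)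
        = ∑ i : F, n * (d i.1 - d (e i)) := by
      rw [← Finset.sum_attach G (fun j => lam j * (d (w j) - d j)), ← Finset.univ_eq_attach]
      rw [← Equiv.sum_comp e (fun y : {x // x ∈ G} => lam y.1 * (d (w y.1) - d y.1))]
      apply Finset.sum_congr rfl
      intro i _
      have hGi : (e i : J) ∈ G := hmemG i
      rw [hwapp, hfG _ hGi]
      have h2 : (⟨(e i : J), hGi⟩ : {x // x ∈ G}) = e i := rfl
      rw [h2, Equiv.symm_apply_apply, (hG hGi).1]
    have hS1 : ∑ j ∈ F, (r - d j) = ∑ i : F, (r - d i.1) :=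
      (Finset.sum_coe_sort F _).symm
    have hS2 : ∑ j ∈ G, (d j - r) = ∑ i : F, (d (e i) - r) := by
      rw [← Finset.sum_coe_sort G (fun j => d j - r)]
      exact (Equiv.sum_comp e (fun y : {x // x ∈ G} => d y.1 - r)).symm
    have hCbound := hC w hfin
    rw [henergy, Finset.sum_union hdisj, hsumF, hsumG, ← Finset.sum_add_distrib] at hCbound
    have hterm : ∀ i : {x // x ∈ F},
        m * (d (e i) - d i.1) + n * (d i.1 - d (e i))
          = -((n - m) * ((r - d i.1) + (d (e i) - r))) := by
      intro i; ring
    rw [Finset.sum_congr rfl (fun i _ => hterm i)] at hCbound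
    rw [Finset.sum_neg_distrib, ← Finset.mul_sum] at hCbound
    rw [Finset.sum_add_distrib] at hCbound
    rw [hS1, hS2]
    set S := ∑ i : F, (r - d i.1) + ∑ i : F, (d (e i) - r) with hS
    have : C ≤ -((n - m) * S) := hCbound
    rw [le_div_iff₀ hnm]
    nlinarith
  constructor
  · apply summable_of_sum_le (c := -C / (n - m))
    · intro j
      exact sub_nonneg.mpr (le_of_lt j.2.2)
    · intro u
      set F : Finset J := u.image Subtype.val with hFdef
      obtain ⟨G, hGsub, hGcard⟩ := h2.exists_subset_card_eq F.card
      have hFsub : (F : Set J) ⊆ {j | lam j = m ∧ d j < r} := by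
        intro j hj
        simp only [hFdef, Finset.coe_image, Set.mem_image] at hj
        obtain ⟨x, _, rfl⟩ := hj
        exact x.2
      have hkey := key F G hFsub hGsub hGcard.symm
      have hsum : ∑ x ∈ u, (r - d x.1) = ∑ j ∈ F, (r - d j) := by
        rw [hFdef, Finset.sum_image (fun x _ y _ h => Subtype.val_injective h)]
      have hGnonneg : 0 ≤ ∑ j ∈ G, (d j - r) :=
        Finset.sum_nonneg fun j hj => sub_nonneg.mpr (le_of_lt (hGsub hj).2)
      rw [hsum]; linarith
  · apply summable_of_sum_le (c := -C / (n - m))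
    · intro j
      exact sub_nonneg.mpr (le_of_lt j.2.2)
    · intro u
      set G : Finset J := u.image Subtype.val with hGdef
      obtain ⟨F, hFsub, hFcard⟩ := h1.exists_subset_card_eq G.card
      have hGsub : (G : Set J) ⊆ {j | lam j = n ∧ r < d j} := by
        intro j hj
        simp only [hGdef, Finset.coe_image, Set.mem_image] at hj
        obtain ⟨x, _, rfl⟩ := hj
        exact x.2
      have hkey := key F G hFsub hGsub hFcard
      have hsum : ∑ x ∈ u, (d x.1 - r) = ∑ j ∈ G, (d j - r) := by
        rw [hGdef, Finset.sum_image (fun x _ y _ h => Subtype.val_injective h)]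
      have hFnonneg : 0 ≤ ∑ j ∈ F, (r - d j) :=
        Finset.sum_nonneg fun j hj => sub_nonneg.mpr (le_of_lt (hFsub hj).2)
      rw [hsum]; linarith
end
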